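/- arXiv:2503.22867 — 3 statements merged into one kernel-verified Lean document; each statement's English description precedes it below -/
import Mathlib

section
/- (MPG construction from individual rewards) Consider a finite product-structured Markov game in which each agent i's reward depends only on its own local state and action, r_i(s_t, a_t) = r_i^self(s_{i,t}, a_{i,t}), the transition kernel factorizes as P(s'|s,a) = ∏_{i=1}^N P_i(s_i'|s_i,a_i), the initial state distribution is a product ρ = ρ_1 ⊗ ⋯ ⊗ ρ_N, and each agent uses a local policy π_{i,θ_i}(a_i|s_i). Then the game is a Markov potential game with potential function φ^self(s_t, a_t) = Σ_{i∈N} r_i^self(s_{i,t}, a_{i,t}); that is, for every agent i, every θ_i, θ_i' ∈ X_i, every θ_{-i}, and every initial state s, the difference in agent i's expected discounted reward under π_{(θ_i',θ_{-i})} versus π_{(θ_i,θ_{-i})} equals the corresponding difference in the expected discounted sum of φ^self. -/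
open scoped BigOperators

/-! Common framework for finite *product-structured* Markov games.  Agents are
indexed by `Fin N`; agent `i` has local finite state space `S i` and finite
action space `A i`.  The global state space is `∀ i, S i`, the transition
kernel factorizes per agent, the initial distribution is a product, and each
agent uses a local directly parameterized policy `θ i : S i → A i → ℝ`. -/

section ProdMGDefs

/-- Distribution of the state at time `t` under transition kernel `P`,
policy `π` and initial distribution `ρ`. -/
def stateDist {σ α : Type} [Fintype σ] [Fintype α] (P : σ → α → σ → ℝ)
    (π : σ → α → ℝ) (ρ : σ → ℝ) : ℕ → σ → ℝ
  | 0 => ρ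
  | t + 1 => fun s' => ∑ s, ∑ a, stateDist P π ρ t s * π s a * P s a s'

/-- Expected discounted sum `E[∑ₜ γ^t f(s_t, a_t)]` of a state-action
function `f`, under kernel `P`, policy `π`, and initial distribution `ρ`. -/
noncomputable def expDisc {σ α : Type} [Fintype σ] [Fintype α] (γ : ℝ)
    (P : σ → α → σ → ℝ) (π : σ → α → ℝ) (ρ : σ → ℝ) (f : σ → α → ℝ) : ℝ :=
  ∑' t : ℕ, γ ^ t * ∑ s, ∑ a, stateDist P π ρ t s * π s a * f s a

/-- Dirac (point-mass) distribution at `s`. -/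
def dirac {σ : Type} [DecidableEq σ] (s : σ) : σ → ℝ :=
  fun s' => if s' = s then 1 else 0

variable {N : ℕ} {S A : Fin N → Type}
variable [∀ i, Fintype (S i)] [∀ i, Fintype (A i)]

/-- Joint policy `π_θ(a|s) = ∏ i, θ_i(a_i|s_i)` induced by the local
directly parameterized policies. -/
def jointPiL (θ : ∀ i, S i → A i → ℝ) : (∀ i, S i) → (∀ i, A i) → ℝ :=
  fun s a => ∏ i, θ i (s i) (a i)

/-- Factorized transition kernel `P(s'|s,a) = ∏ i, P_i(s_i'|s_i,a_i)`. -/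
def jointP (P : ∀ i, S i → A i → S i → ℝ) :
    (∀ i, S i) → (∀ i, A i) → (∀ i, S i) → ℝ :=
  fun s a s' => ∏ i, P i (s i) (a i) (s' i)

/-- Product initial state distribution `ρ = ρ_1 ⊗ ⋯ ⊗ ρ_N`. -/
def jointRho (ρ : ∀ i, S i → ℝ) : (∀ i, S i) → ℝ :=
  fun s => ∏ i, ρ i (s i)

/-- The feasible set of local policy profiles: each `θ i (s i)` lies in the
probability simplex `Δ(A i)`. -/
def feasibleL (θ : ∀ i, S i → A i → ℝ) : Prop :=
  ∀ i, ∀ si, θ i si ∈ stdSimplex ℝ (A i)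

end ProdMGDefs

section AuxGeneric

variable {σ α : Type} [Fintype σ] [Fintype α]

lemma stateDist_succ (P : σ → α → σ → ℝ) (π : σ → α → ℝ) (ρ : σ → ℝ) (t : ℕ) (s' : σ) :
    stateDist P π ρ (t + 1) s' = ∑ s, ∑ a, stateDist P π ρ t s * π s a * P s a s' := rfl

/-- Per-step expected value of a state-action function. -/
def locE (P : σ → α → σ → ℝ) (π : σ → α → ℝ) (ρ : σ → ℝ) (f : σ → α → ℝ) (t : ℕ) : ℝ :=
  ∑ s, ∑ a, stateDist P π ρ t s * π s a * f s a

lemma expDisc_eq_locE (γ : ℝ) (P : σ → α → σ → ℝ) (π : σ → α → ℝ) (ρ : σ → ℝ)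
    (f : σ → α → ℝ) : expDisc γ P π ρ f = ∑' t : ℕ, γ ^ t * locE P π ρ f t := rfl

lemma stateDist_nonneg (P : σ → α → σ → ℝ) (π : σ → α → ℝ) (ρ : σ → ℝ)
    (hρ : ∀ s, 0 ≤ ρ s) (hπ : ∀ s a, 0 ≤ π s a) (hP : ∀ s a s', 0 ≤ P s a s') :
    ∀ t s, 0 ≤ stateDist P π ρ t s := by
  intro t
  induction t with
  | zero => exact hρ
  | succ t ih =>
    intro s'
    exact Finset.sum_nonneg fun s _ => Finset.sum_nonneg fun a _ =>
      mul_nonneg (mul_nonneg (ih s) (hπ s a)) (hP s a s')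

lemma stateDist_sum_one (P : σ → α → σ → ℝ) (π : σ → α → ℝ) (ρ : σ → ℝ)
    (hρ : ∑ s, ρ s = 1) (hπ : ∀ s, ∑ a, π s a = 1) (hP : ∀ s a, ∑ s', P s a s' = 1) :
    ∀ t, ∑ s, stateDist P π ρ t s = 1 := by
  intro t
  induction t with
  | zero => exact hρ
  | succ t ih =>
    simp only [stateDist_succ]
    rw [Finset.sum_comm]
    have h2 : ∀ s, (∑ s', ∑ a, stateDist P π ρ t s * π s a * P s a s')
        = stateDist P π ρ t s := by
      intro s
      rw [Finset.sum_comm]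
      have h1 : ∀ a, (∑ s', stateDist P π ρ t s * π s a * P s a s')
          = stateDist P π ρ t s * π s a := by
        intro a; rw [← Finset.mul_sum, hP, mul_one]
      simp only [h1]
      rw [← Finset.mul_sum, hπ, mul_one]
    simp only [h2]
    exact ih

lemma locE_abs_le (P : σ → α → σ → ℝ) (π : σ → α → ℝ) (ρ : σ → ℝ)
    (hρ0 : ∀ s, 0 ≤ ρ s) (hρ1 : ∑ s, ρ s = 1)
    (hπ0 : ∀ s a, 0 ≤ π s a) (hπ1 : ∀ s, ∑ a, π s a = 1)
    (hP0 : ∀ s a s', 0 ≤ P s a s') (hP1 : ∀ s a, ∑ s', P s a s' = 1)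
    (f : σ → α → ℝ) (M : ℝ) (hM : ∀ s a, |f s a| ≤ M) (t : ℕ) :
    |locE P π ρ f t| ≤ M := by
  have hD0 := stateDist_nonneg P π ρ hρ0 hπ0 hP0
  have key : |locE P π ρ f t| ≤ ∑ s, ∑ a, stateDist P π ρ t s * π s a * M := by
    refine (Finset.abs_sum_le_sum_abs _ _).trans (Finset.sum_le_sum fun s _ => ?_)
    refine (Finset.abs_sum_le_sum_abs _ _).trans (Finset.sum_le_sum fun a _ => ?_)
    rw [abs_mul, abs_of_nonneg (mul_nonneg (hD0 t s) (hπ0 s a))]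
    exact mul_le_mul_of_nonneg_left (hM s a) (mul_nonneg (hD0 t s) (hπ0 s a))
  refine key.trans_eq ?_
  have h1 : ∀ s, (∑ a, stateDist P π ρ t s * π s a * M) = stateDist P π ρ t s * M := by
    intro s
    calc ∑ a, stateDist P π ρ t s * π s a * M
        = stateDist P π ρ t s * M * ∑ a, π s a := by
          rw [Finset.mul_sum]; exact Finset.sum_congr rfl fun a _ => by ring
      _ = stateDist P π ρ t s * M := by rw [hπ1, mul_one]
  simp only [h1]
  rw [← Finset.sum_mul, stateDist_sum_one P π ρ hρ1 hπ1 hP1, one_mul]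

lemma summable_disc (γ : ℝ) (hγ0 : 0 ≤ γ) (hγ1 : γ < 1) (c : ℕ → ℝ) (M : ℝ)
    (hM : ∀ t, |c t| ≤ M) : Summable fun t => γ ^ t * c t := by
  refine Summable.of_norm_bounded
    ((summable_geometric_of_lt_one hγ0 hγ1).mul_left M) fun t => ?_
  rw [Real.norm_eq_abs, abs_mul, abs_pow, abs_of_nonneg hγ0, mul_comm]
  exact mul_le_mul_of_nonneg_right (hM t) (pow_nonneg hγ0 t)

lemma dirac_nonneg {σ : Type} [DecidableEq σ] (c : σ) : ∀ s, 0 ≤ dirac c s := by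
  intro s; unfold dirac; split_ifs <;> norm_num

lemma dirac_sum_one {σ : Type} [Fintype σ] [DecidableEq σ] (c : σ) :
    ∑ s, dirac c s = 1 := by simp [dirac]

end AuxGeneric

section AuxProd

variable {N : ℕ} {S A : Fin N → Type}
variable [∀ i, Fintype (S i)] [∀ i, DecidableEq (S i)] [∀ i, Fintype (A i)]

lemma sum_sum_prod (h : ∀ i, S i → A i → ℝ) :
    ∑ s : ∀ i, S i, ∑ a : ∀ i, A i, ∏ i, h i (s i) (a i) = ∏ i, ∑ si, ∑ ai, h i si ai := by
  rw [Fintype.prod_sum (f := fun i si => ∑ ai, h i si ai)]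
  exact Finset.sum_congr rfl fun s _ => (Fintype.prod_sum _).symm

lemma stateDist_factor (P : ∀ i, S i → A i → S i → ℝ) (θ : ∀ i, S i → A i → ℝ)
    (s0 : ∀ i, S i) :
    ∀ t (s : ∀ i, S i),
      stateDist (jointP P) (jointPiL θ) (dirac s0) t s
        = ∏ i, stateDist (P i) (θ i) (dirac (s0 i)) t (s i) := by
  intro t
  induction t with
  | zero =>
    intro s
    show dirac s0 s = ∏ i, dirac (s0 i) (s i)
    by_cases h : s = s0
    · subst h; simp [dirac]
    · obtain ⟨i, hi⟩ : ∃ i, s i ≠ s0 i := by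
        by_contra hc; push_neg at hc; exact h (funext hc)
      rw [show dirac s0 s = 0 from if_neg h]
      exact (Finset.prod_eq_zero (Finset.mem_univ i) (show dirac (s0 i) (s i) = 0 from if_neg hi)).symm
  | succ t ih =>
    intro s'
    rw [stateDist_succ]
    have key : ∀ (s : ∀ i, S i) (a : ∀ i, A i),
        stateDist (jointP P) (jointPiL θ) (dirac s0) t s * jointPiL θ s a * jointP P s a s'
          = ∏ i, (stateDist (P i) (θ i) (dirac (s0 i)) t (s i) * θ i (s i) (a i)
              * P i (s i) (a i) (s' i)) := by
      intro s a
      rw [ih s]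
      simp only [jointPiL, jointP, ← Finset.prod_mul_distrib]
    simp only [key]
    rw [sum_sum_prod (fun i si ai =>
      stateDist (P i) (θ i) (dirac (s0 i)) t si * θ i si ai * P i si ai (s' i))]
    exact Finset.prod_congr rfl fun i _ => (stateDist_succ _ _ _ _ _).symm

lemma locE_coord (P : ∀ i, S i → A i → S i → ℝ)
    (hP0 : ∀ i si ai si', 0 ≤ P i si ai si') (hP1 : ∀ i si ai, ∑ si', P i si ai si' = 1)
    (θ : ∀ i, S i → A i → ℝ)
    (hθ0 : ∀ i si ai, 0 ≤ θ i si ai) (hθ1 : ∀ i si, ∑ ai, θ i si ai = 1)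
    (s0 : ∀ i, S i) (j : Fin N) (f : S j → A j → ℝ) (t : ℕ) :
    locE (jointP P) (jointPiL θ) (dirac s0) (fun st b => f (st j) (b j)) t
      = locE (P j) (θ j) (dirac (s0 j)) f t := by
  classical
  set h : ∀ i, S i → A i → ℝ :=
    Function.update (fun i si ai => stateDist (P i) (θ i) (dirac (s0 i)) t si * θ i si ai)
      j (fun sj aj => stateDist (P j) (θ j) (dirac (s0 j)) t sj * θ j sj aj * f sj aj)
    with hh
  have hbase : ∀ i, i ≠ j →
      h i = fun si ai => stateDist (P i) (θ i) (dirac (s0 i)) t si * θ i si ai :=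
    fun i hij => by rw [hh]; exact Function.update_of_ne hij _ _
  have hjj : h j = fun sj aj =>
      stateDist (P j) (θ j) (dirac (s0 j)) t sj * θ j sj aj * f sj aj := by
    rw [hh]; exact Function.update_self _ _ _
  have hkey : ∀ (s : ∀ i, S i) (a : ∀ i, A i),
      stateDist (jointP P) (jointPiL θ) (dirac s0) t s * jointPiL θ s a * f (s j) (a j)
        = ∏ i, h i (s i) (a i) := by
    intro s a
    rw [stateDist_factor P θ s0 t s,
      show jointPiL θ s a = ∏ i, θ i (s i) (a i) from rfl, ← Finset.prod_mul_distrib,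
      ← Finset.mul_prod_erase Finset.univ (fun i => h i (s i) (a i)) (Finset.mem_univ j)]
    have e2 : (∏ i ∈ Finset.univ.erase j, h i (s i) (a i))
        = ∏ i ∈ Finset.univ.erase j,
            stateDist (P i) (θ i) (dirac (s0 i)) t (s i) * θ i (s i) (a i) :=
      Finset.prod_congr rfl fun i hi => by
        rw [hbase i (Finset.mem_erase.1 hi).1]
    rw [e2, ← Finset.mul_prod_erase Finset.univ
        (fun i => stateDist (P i) (θ i) (dirac (s0 i)) t (s i) * θ i (s i) (a i))
        (Finset.mem_univ j)]
    simp only [hjj]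
    ring
  show (∑ s : ∀ i, S i, ∑ a : ∀ i, A i,
      stateDist (jointP P) (jointPiL θ) (dirac s0) t s * jointPiL θ s a * f (s j) (a j)) = _
  simp only [hkey]
  rw [sum_sum_prod]
  have hone : ∀ i ∈ Finset.univ, i ≠ j → (∑ si, ∑ ai, h i si ai) = 1 := by
    intro i _ hij
    simp only [hbase i hij]
    have h1 : ∀ si, (∑ ai, stateDist (P i) (θ i) (dirac (s0 i)) t si * θ i si ai)
        = stateDist (P i) (θ i) (dirac (s0 i)) t si := by
      intro si; rw [← Finset.mul_sum, hθ1, mul_one]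
    simp only [h1]
    exact stateDist_sum_one _ _ _ (dirac_sum_one _) (hθ1 i) (hP1 i) t
  rw [Finset.prod_eq_single j hone (fun hj' => absurd (Finset.mem_univ j) hj')]
  simp only [hjj]
  rfl

end AuxProd

/-- **MPG construction from individual rewards.** In a finite
product-structured Markov game where each agent's reward depends only on its
own local state and action, the game is a Markov potential game with potential
`φ^self(s,a) = ∑ i, r_i^self(s_i, a_i)`. -/
theorem mpg_construction_from_individual_rewards
    {N : ℕ} {S A : Fin N → Type}
    [∀ i, Fintype (S i)] [∀ i, DecidableEq (S i)] [∀ i, Fintype (A i)]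
    [∀ i, Nonempty (S i)] [∀ i, Nonempty (A i)]
    (γ : ℝ) (hγ0 : 0 ≤ γ) (hγ1 : γ < 1)
    (P : ∀ i, S i → A i → S i → ℝ)
    (hP : ∀ i si ai, P i si ai ∈ stdSimplex ℝ (S i))
    (ρ : ∀ i, S i → ℝ) (hρ : ∀ i, ρ i ∈ stdSimplex ℝ (S i))
    (rself : ∀ i, S i → A i → ℝ) :
    ∀ i : Fin N, ∀ θ : ∀ j, S j → A j → ℝ, feasibleL θ →
      ∀ θi' : S i → A i → ℝ, (∀ si, θi' si ∈ stdSimplex ℝ (A i)) →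
        ∀ s : ∀ j, S j,
          expDisc γ (jointP P) (jointPiL (Function.update θ i θi')) (dirac s)
              (fun st b => rself i (st i) (b i))
            - expDisc γ (jointP P) (jointPiL θ) (dirac s)
              (fun st b => rself i (st i) (b i))
          = expDisc γ (jointP P) (jointPiL (Function.update θ i θi')) (dirac s)
              (fun st b => ∑ j, rself j (st j) (b j))
            - expDisc γ (jointP P) (jointPiL θ) (dirac s)
              (fun st b => ∑ j, rself j (st j) (b j)) := by
  intro i θ hθ θi' hθi' s
  classical
  have hP0 : ∀ j sj aj sj', 0 ≤ P j sj aj sj' := fun j sj aj => (hP j sj aj).1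
  have hP1 : ∀ j sj aj, ∑ sj', P j sj aj sj' = 1 := fun j sj aj => (hP j sj aj).2
  set θ' := Function.update θ i θi' with hθ'def
  have hθ'mem : ∀ j sj, θ' j sj ∈ stdSimplex ℝ (A j) := by
    intro j sj
    by_cases hji : j = i
    · subst hji; rw [hθ'def, Function.update_self]; exact hθi' sj
    · rw [hθ'def, Function.update_of_ne hji]; exact hθ j sj
  -- bounds on rewards
  obtain ⟨M, hM⟩ : ∃ M : Fin N → ℝ, ∀ j sj aj, |rself j sj aj| ≤ M j := by
    have hex := fun j => Finite.exists_le (fun p : S j × A j => |rself j p.1 p.2|)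
    choose M hM using hex
    exact ⟨M, fun j sj aj => hM j (sj, aj)⟩
  -- the key rewriting lemmas
  have h1 : ∀ (τ : ∀ j, S j → A j → ℝ), (∀ j sj, τ j sj ∈ stdSimplex ℝ (A j)) →
      expDisc γ (jointP P) (jointPiL τ) (dirac s) (fun st b => rself i (st i) (b i))
        = ∑' t : ℕ, γ ^ t * locE (P i) (τ i) (dirac (s i)) (rself i) t := by
    intro τ hτ
    rw [expDisc_eq_locE]
    exact tsum_congr fun t => by
      rw [locE_coord P hP0 hP1 τ (fun j sj aj => (hτ j sj).1 aj) (fun j sj => (hτ j sj).2)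
        s i (rself i) t]
  have h2 : ∀ (τ : ∀ j, S j → A j → ℝ), (∀ j sj, τ j sj ∈ stdSimplex ℝ (A j)) →
      expDisc γ (jointP P) (jointPiL τ) (dirac s) (fun st b => ∑ j, rself j (st j) (b j))
        = ∑' t : ℕ, γ ^ t * ∑ j, locE (P j) (τ j) (dirac (s j)) (rself j) t := by
    intro τ hτ
    rw [expDisc_eq_locE]
    refine tsum_congr fun t => ?_
    congr 1
    have e : ∀ (st : ∀ j, S j) (b : ∀ j, A j),
        stateDist (jointP P) (jointPiL τ) (dirac s) t st * jointPiL τ st b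
            * ∑ j, rself j (st j) (b j)
          = ∑ j, stateDist (jointP P) (jointPiL τ) (dirac s) t st * jointPiL τ st b
              * rself j (st j) (b j) := fun st b => Finset.mul_sum _ _ _
    show (∑ st : ∀ j, S j, ∑ b : ∀ j, A j,
        stateDist (jointP P) (jointPiL τ) (dirac s) t st * jointPiL τ st b
          * ∑ j, rself j (st j) (b j)) = _
    simp only [e]
    calc ∑ st : ∀ j, S j, ∑ b : ∀ j, A j, ∑ j,
            stateDist (jointP P) (jointPiL τ) (dirac s) t st * jointPiL τ st b
              * rself j (st j) (b j)
        = ∑ st : ∀ j, S j, ∑ j, ∑ b : ∀ j, A j,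
            stateDist (jointP P) (jointPiL τ) (dirac s) t st * jointPiL τ st b
              * rself j (st j) (b j) :=
          Finset.sum_congr rfl fun st _ => Finset.sum_comm
      _ = ∑ j, ∑ st : ∀ j, S j, ∑ b : ∀ j, A j,
            stateDist (jointP P) (jointPiL τ) (dirac s) t st * jointPiL τ st b
              * rself j (st j) (b j) := Finset.sum_comm
      _ = ∑ j, locE (P j) (τ j) (dirac (s j)) (rself j) t :=
          Finset.sum_congr rfl fun j _ =>
            locE_coord P hP0 hP1 τ (fun j sj aj => (hτ j sj).1 aj) (fun j sj => (hτ j sj).2)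
              s j (rself j) t
  -- summability
  have habs : ∀ (τ : ∀ j, S j → A j → ℝ), (∀ j sj, τ j sj ∈ stdSimplex ℝ (A j)) →
      ∀ j t, |locE (P j) (τ j) (dirac (s j)) (rself j) t| ≤ M j := by
    intro τ hτ j t
    exact locE_abs_le (P j) (τ j) (dirac (s j)) (dirac_nonneg _) (dirac_sum_one _)
      (fun sj aj => (hτ j sj).1 aj) (fun sj => (hτ j sj).2) (hP0 j) (hP1 j)
      (rself j) (M j) (hM j) t
  have hs1 : ∀ (τ : ∀ j, S j → A j → ℝ), (∀ j sj, τ j sj ∈ stdSimplex ℝ (A j)) →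
      Summable (fun t => γ ^ t * locE (P i) (τ i) (dirac (s i)) (rself i) t) := by
    intro τ hτ
    exact summable_disc γ hγ0 hγ1 _ (M i) (habs τ hτ i)
  have hs2 : ∀ (τ : ∀ j, S j → A j → ℝ), (∀ j sj, τ j sj ∈ stdSimplex ℝ (A j)) →
      Summable (fun t => γ ^ t * ∑ j, locE (P j) (τ j) (dirac (s j)) (rself j) t) := by
    intro τ hτ
    refine summable_disc γ hγ0 hγ1 _ (∑ j, M j) fun t => ?_
    exact (Finset.abs_sum_le_sum_abs _ _).trans
      (Finset.sum_le_sum fun j _ => habs τ hτ j t)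
  rw [h1 θ' hθ'mem, h1 θ hθ, h2 θ' hθ'mem, h2 θ hθ,
    ← Summable.tsum_sub (hs1 θ' hθ'mem) (hs1 θ hθ), ← Summable.tsum_sub (hs2 θ' hθ'mem) (hs2 θ hθ)]
  refine tsum_congr fun t => ?_
  have key : (∑ j, locE (P j) (θ' j) (dirac (s j)) (rself j) t)
        - (∑ j, locE (P j) (θ j) (dirac (s j)) (rself j) t)
      = locE (P i) (θ' i) (dirac (s i)) (rself i) t
        - locE (P i) (θ i) (dirac (s i)) (rself i) t := by
    rw [← Finset.sum_sub_distrib]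
    refine Finset.sum_eq_single i (fun j _ hji => ?_)
      (fun hi' => absurd (Finset.mem_univ i) hi')
    rw [hθ'def, Function.update_of_ne hji, sub_self]
  linear_combination γ ^ t * key.symm
end

section
/- (MPG construction from mixed rewards) Consider a finite product-structured Markov game in which each agent i's reward has the mixed form r_i(s_t, a_t) = α·r_i^self(s_{i,t}, a_{i,t}) + β·Σ_{j∈N, j≠i} r_ij(s_{i,t}, s_{j,t}, a_{i,t}, a_{j,t}) for real constants α, β, where r_ij(s_i, s_j, a_i, a_j) = r_ji(s_j, s_i, a_j, a_i) for all i ≠ j, the transition kernel factorizes as P(s'|s,a) = ∏_{i=1}^N P_i(s_i'|s_i,a_i), the initial state distribution is a product ρ = ρ_1 ⊗ ⋯ ⊗ ρ_N, and each agent uses a local policy π_{i,θ_i}(a_i|s_i). Then the game is a Markov potential game with potential function φ(s_t,a_t) = α·Σ_{i∈N} r_i^self(s_{i,t}, a_{i,t}) + β·Σ_{i∈N} Σ_{j∈N, j<i} r_ij(s_{i,t}, s_{j,t}, a_{i,t}, a_{j,t}). -/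
open scoped BigOperators

open Finset

/-! ### Auxiliary lemmas -/

section L1
variable {ι : Type} [Fintype ι] [DecidableEq ι] {δ : ι → Type} [∀ j, Fintype (δ j)]

lemma sum_pi_swap (i : ι) [Nonempty (δ i)]
    (F F' : ∀ j, δ j → ℝ) (g g' : (∀ j, δ j) → ℝ)
    (hF : ∀ j, j ≠ i → F j = F' j)
    (hsum : ∑ v, F i v = ∑ v, F' i v)
    (hg : ∀ x (v v' : δ i), g (Function.update x i v) = g' (Function.update x i v')) :
    ∑ x, (∏ j, F j (x j)) * g x = ∑ x, (∏ j, F' j (x j)) * g' x := by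
  classical
  set e := Equiv.piSplitAt i δ with he
  obtain ⟨v₀⟩ := ‹Nonempty (δ i)›
  have hupd : ∀ (v : δ i) (y : ∀ j : {j // j ≠ i}, δ j),
      e.symm (v, y) = Function.update (e.symm (v₀, y)) i v := by
    intro v y
    funext j
    by_cases h : j = i
    · subst h; simp [he, Equiv.piSplitAt_symm_apply]
    · simp [he, Equiv.piSplitAt_symm_apply, h, Function.update_of_ne h]
  have key : ∀ (G : ∀ j, δ j → ℝ) (k : (∀ j, δ j) → ℝ),
      (∀ x (v v' : δ i), k (Function.update x i v) = k (Function.update x i v')) →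
      ∑ x, (∏ j, G j (x j)) * k x
        = (∑ v, G i v) * ∑ y : (∀ j : {j // j ≠ i}, δ j),
            (∏ j ∈ univ.erase i, G j ((e.symm (v₀, y)) j)) * k (e.symm (v₀, y)) := by
    intro G k hk
    rw [← Equiv.sum_comp e.symm, Fintype.sum_prod_type, Finset.sum_mul_sum]
    refine Finset.sum_congr rfl fun v _ => Finset.sum_congr rfl fun y _ => ?_
    rw [hupd v y]
    set w := e.symm (v₀, y) with hw
    have h1 : (fun j => G j (Function.update w i v j)) =
        Function.update (fun j => G j (w j)) i (G i v) := by
      funext j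
      by_cases h : j = i
      · subst h; simp
      · simp [Function.update_of_ne h]
    have h2 : ∏ j, G j (Function.update w i v j) = G i v * ∏ j ∈ univ.erase i, G j (w j) := by
      calc ∏ j, G j (Function.update w i v j)
          = ∏ j, Function.update (fun j => G j (w j)) i (G i v) j := by rw [h1]
        _ = G i v * ∏ j ∈ univ.erase i, G j (w j) := by
            rw [Finset.prod_update_of_mem (Finset.mem_univ i)]
            rw [Finset.sdiff_singleton_eq_erase]
    have h3 : k (Function.update w i v) = k w := by
      conv_rhs => rw [← Function.update_eq_self i w]
      exact hk w v (w i)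
    rw [h2, h3]; ring
  have hg1 : ∀ x (v v' : δ i), g (Function.update x i v) = g (Function.update x i v') :=
    fun x v v' => (hg x v v').trans (hg x v' v').symm
  have hg2 : ∀ x (v v' : δ i), g' (Function.update x i v) = g' (Function.update x i v') :=
    fun x v v' => (hg x v v).symm.trans (hg x v v')
  rw [key F g hg1, key F' g' hg2, hsum]
  congr 1
  refine Finset.sum_congr rfl fun y _ => ?_
  have hgg : g (e.symm (v₀, y)) = g' (e.symm (v₀, y)) := by
    conv_lhs => rw [← Function.update_eq_self i (e.symm (v₀, y))]
    conv_rhs => rw [← Function.update_eq_self i (e.symm (v₀, y))]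
    exact hg _ _ _
  rw [hgg]
  congr 1
  exact Finset.prod_congr rfl fun j hj => by rw [hF j (Finset.ne_of_mem_erase hj)]
end L1

section Gen
variable {σ α : Type} [Fintype σ] [Fintype α]
variable {P : σ → α → σ → ℝ} {π : σ → α → ℝ} {ρ : σ → ℝ}

lemma stateDist_mem (hP : ∀ s a, P s a ∈ stdSimplex ℝ σ)
    (hπ : ∀ s, π s ∈ stdSimplex ℝ α) (hρ : ρ ∈ stdSimplex ℝ σ) :
    ∀ t, stateDist P π ρ t ∈ stdSimplex ℝ σ := by
  intro t
  induction t with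
  | zero => exact hρ
  | succ t ih =>
    constructor
    · intro s'
      refine Finset.sum_nonneg fun s _ => Finset.sum_nonneg fun a _ => ?_
      exact mul_nonneg (mul_nonneg (ih.1 s) ((hπ s).1 a)) ((hP s a).1 s')
    · show ∑ s', ∑ s, ∑ a, stateDist P π ρ t s * π s a * P s a s' = 1
      calc ∑ s', ∑ s, ∑ a, stateDist P π ρ t s * π s a * P s a s'
          = ∑ s, ∑ a, ∑ s', stateDist P π ρ t s * π s a * P s a s' := by
            rw [Finset.sum_comm]
            exact Finset.sum_congr rfl fun s _ => Finset.sum_comm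
        _ = ∑ s, ∑ a, stateDist P π ρ t s * π s a := by
            refine Finset.sum_congr rfl fun s _ => Finset.sum_congr rfl fun a _ => ?_
            rw [← Finset.mul_sum, (hP s a).2, mul_one]
        _ = ∑ s, stateDist P π ρ t s := by
            refine Finset.sum_congr rfl fun s _ => ?_
            rw [← Finset.mul_sum, (hπ s).2, mul_one]
        _ = 1 := ih.2

lemma perstep_bound (hP : ∀ s a, P s a ∈ stdSimplex ℝ σ)
    (hπ : ∀ s, π s ∈ stdSimplex ℝ α) (hρ : ρ ∈ stdSimplex ℝ σ) (f : σ → α → ℝ) (t : ℕ) :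
    |∑ s, ∑ a, stateDist P π ρ t s * π s a * f s a| ≤ ∑ s, ∑ a, |f s a| := by
  have hd := stateDist_mem hP hπ hρ t
  calc |∑ s, ∑ a, stateDist P π ρ t s * π s a * f s a|
      ≤ ∑ s, |∑ a, stateDist P π ρ t s * π s a * f s a| := Finset.abs_sum_le_sum_abs _ _
    _ ≤ ∑ s, ∑ a, |stateDist P π ρ t s * π s a * f s a| :=
        Finset.sum_le_sum fun s _ => Finset.abs_sum_le_sum_abs _ _
    _ ≤ ∑ s, ∑ a, |f s a| := by
        refine Finset.sum_le_sum fun s _ => Finset.sum_le_sum fun a _ => ?_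
        rw [abs_mul, abs_of_nonneg (mul_nonneg (hd.1 s) ((hπ s).1 a))]
        have h1 : stateDist P π ρ t s * π s a ≤ 1 :=
          mul_le_one₀ (mem_Icc_of_mem_stdSimplex hd s).2 ((hπ s).1 a)
            (mem_Icc_of_mem_stdSimplex (hπ s) a).2
        nlinarith [abs_nonneg (f s a)]

lemma summable_expDisc {γ : ℝ} (hγ0 : 0 ≤ γ) (hγ1 : γ < 1)
    (hP : ∀ s a, P s a ∈ stdSimplex ℝ σ)
    (hπ : ∀ s, π s ∈ stdSimplex ℝ α) (hρ : ρ ∈ stdSimplex ℝ σ) (f : σ → α → ℝ) :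
    Summable (fun t => γ ^ t * ∑ s, ∑ a, stateDist P π ρ t s * π s a * f s a) := by
  refine Summable.of_norm_bounded (g := fun t => γ ^ t * ∑ s, ∑ a, |f s a|)
    ((summable_geometric_of_lt_one hγ0 hγ1).mul_right _) fun t => ?_
  rw [Real.norm_eq_abs, abs_mul, abs_of_nonneg (pow_nonneg hγ0 t)]
  exact mul_le_mul_of_nonneg_left (perstep_bound hP hπ hρ f t) (pow_nonneg hγ0 t)

lemma expDisc_add {γ : ℝ} (hγ0 : 0 ≤ γ) (hγ1 : γ < 1)
    (hP : ∀ s a, P s a ∈ stdSimplex ℝ σ)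
    (hπ : ∀ s, π s ∈ stdSimplex ℝ α) (hρ : ρ ∈ stdSimplex ℝ σ) (f g : σ → α → ℝ) :
    expDisc γ P π ρ (fun s a => f s a + g s a) = expDisc γ P π ρ f + expDisc γ P π ρ g := by
  unfold expDisc
  rw [← Summable.tsum_add (summable_expDisc hγ0 hγ1 hP hπ hρ f) (summable_expDisc hγ0 hγ1 hP hπ hρ g)]
  refine tsum_congr fun t => ?_
  rw [← mul_add, ← Finset.sum_add_distrib]
  congr 1
  refine Finset.sum_congr rfl fun s _ => ?_
  rw [← Finset.sum_add_distrib]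
  exact Finset.sum_congr rfl fun a _ => by ring

lemma rearrange (d : σ → ℝ) (h : σ → ℝ) :
    ∑ s1, (∑ s, ∑ a, d s * π s a * P s a s1) * h s1
      = ∑ s, d s * ∑ a, π s a * ∑ s1, P s a s1 * h s1 := by
  calc ∑ s1, (∑ s, ∑ a, d s * π s a * P s a s1) * h s1
      = ∑ s1, ∑ s, ∑ a, d s * π s a * P s a s1 * h s1 := by
        refine Finset.sum_congr rfl fun s1 _ => ?_
        rw [Finset.sum_mul]
        exact Finset.sum_congr rfl fun s _ => by rw [Finset.sum_mul]
    _ = ∑ s, ∑ s1, ∑ a, d s * π s a * P s a s1 * h s1 := Finset.sum_comm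
    _ = ∑ s, ∑ a, ∑ s1, d s * π s a * P s a s1 * h s1 :=
        Finset.sum_congr rfl fun s _ => Finset.sum_comm
    _ = ∑ s, d s * ∑ a, π s a * ∑ s1, P s a s1 * h s1 := by
        refine Finset.sum_congr rfl fun s _ => ?_
        rw [Finset.mul_sum]
        refine Finset.sum_congr rfl fun a _ => ?_
        rw [Finset.mul_sum, Finset.mul_sum]
        exact Finset.sum_congr rfl fun s1 _ => by ring
end Gen

section Prod
variable {N : ℕ} {S A : Fin N → Type}
variable [∀ i, Fintype (S i)] [∀ i, Fintype (A i)]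
variable [∀ i, Nonempty (S i)] [∀ i, Nonempty (A i)]

lemma jointPiL_row (θ : ∀ i, S i → A i → ℝ) (hθ : feasibleL θ) (s : ∀ i, S i) :
    jointPiL θ s ∈ stdSimplex ℝ (∀ i, A i) := by
  constructor
  · intro a
    exact Finset.prod_nonneg fun j _ => (hθ j (s j)).1 (a j)
  · show ∑ a : ∀ i, A i, ∏ j, θ j (s j) (a j) = 1
    classical
    rw [← Fintype.piFinset_univ, ← Finset.prod_univ_sum]
    exact Finset.prod_eq_one fun j _ => (hθ j (s j)).2

lemma jointP_row (P : ∀ i, S i → A i → S i → ℝ)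
    (hP : ∀ i si ai, P i si ai ∈ stdSimplex ℝ (S i)) (s : ∀ i, S i) (a : ∀ i, A i) :
    jointP P s a ∈ stdSimplex ℝ (∀ i, S i) := by
  constructor
  · intro s'
    exact Finset.prod_nonneg fun j _ => (hP j (s j) (a j)).1 (s' j)
  · show ∑ s' : ∀ i, S i, ∏ j, P j (s j) (a j) (s' j) = 1
    classical
    rw [← Fintype.piFinset_univ, ← Finset.prod_univ_sum]
    exact Finset.prod_eq_one fun j _ => (hP j (s j) (a j)).2

lemma dirac_mem {σ : Type} [Fintype σ] [DecidableEq σ] (s : σ) :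
    dirac s ∈ stdSimplex ℝ σ := by
  constructor
  · intro s'; unfold dirac; positivity
  · simp [dirac]

variable [∀ i, DecidableEq (S i)]
variable (i : Fin N)

/-- Marginal invariance of the per-state action average, for functions that do
not depend on agent `i`'s coordinates. -/
lemma action_marginal (θa θb : ∀ j, S j → A j → ℝ)
    (ha : feasibleL θa) (hb : feasibleL θb)
    (hab : ∀ j, j ≠ i → θa j = θb j)
    (g : (∀ j, S j) → (∀ j, A j) → ℝ)
    (hg : ∀ st b x y, g (Function.update st i x) (Function.update b i y) = g st b)
    (s s' : ∀ j, S j) (hss : ∀ j, j ≠ i → s j = s' j) :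
    ∑ a, jointPiL θa s a * g s a = ∑ a, jointPiL θb s' a * g s' a := by
  classical
  have hs' : s' = Function.update s i (s' i) := by
    funext j
    by_cases h : j = i
    · subst h; simp
    · rw [Function.update_of_ne h, hss j h]
  refine sum_pi_swap i (fun j => θa j (s j)) (fun j => θb j (s' j))
    (fun a => g s a) (fun a => g s' a) (fun j h => by show θa j (s j) = θb j (s' j); rw [hab j h, hss j h])
    ((ha i (s i)).2.trans ((hb i (s' i)).2).symm) (fun a v v' => ?_)
  have h1 : g s (Function.update a i v) = g s a := by
    conv_lhs => rw [← Function.update_eq_self i s]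
    exact hg s a (s i) v
  have h2 : g s' (Function.update a i v') = g s a := by
    rw [hs']
    exact hg s a (s' i) v'
  show g s (Function.update a i v) = g s' (Function.update a i v')
  rw [h1, h2]

lemma trans_marginal (P : ∀ j, S j → A j → S j → ℝ)
    (hP : ∀ j sj aj, P j sj aj ∈ stdSimplex ℝ (S j))
    (h : (∀ j, S j) → ℝ) (hh : ∀ x v, h (Function.update x i v) = h x)
    (s : ∀ j, S j) (a : ∀ j, A j) (x : S i) (y : A i) :
    ∑ s1, jointP P (Function.update s i x) (Function.update a i y) s1 * h s1
      = ∑ s1, jointP P s a s1 * h s1 := by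
  classical
  refine sum_pi_swap i
    (fun j => P j (Function.update s i x j) (Function.update a i y j))
    (fun j => P j (s j) (a j)) h h
    (fun j hj => by show P j (Function.update s i x j) (Function.update a i y j) = P j (s j) (a j); rw [Function.update_of_ne hj, Function.update_of_ne hj])
    (by simp only [Function.update_self]
        exact (hP i x y).2.trans ((hP i (s i) (a i)).2).symm)
    (fun z v v' => by rw [hh z v, hh z v'])


lemma dist_marginal (P : ∀ j, S j → A j → S j → ℝ)
    (hP : ∀ j sj aj, P j sj aj ∈ stdSimplex ℝ (S j))
    (θ θ' : ∀ j, S j → A j → ℝ) (hθ : feasibleL θ) (hθ' : feasibleL θ')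
    (hab : ∀ j, j ≠ i → θ' j = θ j) (s0 : ∀ j, S j) :
    ∀ t (h : (∀ j, S j) → ℝ), (∀ x v, h (Function.update x i v) = h x) →
      ∑ s1, stateDist (jointP P) (jointPiL θ') (dirac s0) t s1 * h s1
        = ∑ s1, stateDist (jointP P) (jointPiL θ) (dirac s0) t s1 * h s1 := by
  intro t
  induction t with
  | zero => intro h _; rfl
  | succ t ih =>
    intro h hh
    set H : (∀ j, S j) → (∀ j, A j) → ℝ := fun s a => ∑ s1, jointP P s a s1 * h s1 with hH
    have hHind : ∀ st b x y, H (Function.update st i x) (Function.update b i y) = H st b :=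
      fun st b x y => trans_marginal i P hP h hh st b x y
    set h2 : (∀ j, S j) → ℝ := fun s => ∑ a, jointPiL θ s a * H s a with hh2def
    have hh2 : ∀ x v, h2 (Function.update x i v) = h2 x := fun x v =>
      action_marginal i θ θ hθ hθ (fun _ _ => rfl) H hHind (Function.update x i v) x
        (fun j hj => Function.update_of_ne hj v x)
    simp only [stateDist]
    rw [rearrange, rearrange]
    calc ∑ s, stateDist (jointP P) (jointPiL θ') (dirac s0) t s *
            ∑ a, jointPiL θ' s a * ∑ s1, jointP P s a s1 * h s1
        = ∑ s, stateDist (jointP P) (jointPiL θ') (dirac s0) t s * h2 s := by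
          refine Finset.sum_congr rfl fun s _ => ?_
          congr 1
          exact action_marginal i θ' θ hθ' hθ hab H hHind s s (fun _ _ => rfl)
      _ = ∑ s, stateDist (jointP P) (jointPiL θ) (dirac s0) t s * h2 s := ih h2 hh2
      _ = ∑ s, stateDist (jointP P) (jointPiL θ) (dirac s0) t s *
            ∑ a, jointPiL θ s a * ∑ s1, jointP P s a s1 * h s1 := rfl

lemma time_marginal (P : ∀ j, S j → A j → S j → ℝ)
    (hP : ∀ j sj aj, P j sj aj ∈ stdSimplex ℝ (S j))
    (θ θ' : ∀ j, S j → A j → ℝ) (hθ : feasibleL θ) (hθ' : feasibleL θ')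
    (hab : ∀ j, j ≠ i → θ' j = θ j) (s0 : ∀ j, S j)
    (g : (∀ j, S j) → (∀ j, A j) → ℝ)
    (hg : ∀ st b x y, g (Function.update st i x) (Function.update b i y) = g st b) (t : ℕ) :
    ∑ s1, ∑ a, stateDist (jointP P) (jointPiL θ') (dirac s0) t s1 * jointPiL θ' s1 a * g s1 a
      = ∑ s1, ∑ a, stateDist (jointP P) (jointPiL θ) (dirac s0) t s1 * jointPiL θ s1 a * g s1 a := by
  set h2 : (∀ j, S j) → ℝ := fun s => ∑ a, jointPiL θ s a * g s a with hh2def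
  have hh2 : ∀ x v, h2 (Function.update x i v) = h2 x := fun x v =>
    action_marginal i θ θ hθ hθ (fun _ _ => rfl) g hg (Function.update x i v) x
      (fun j hj => Function.update_of_ne hj v x)
  calc ∑ s1, ∑ a, stateDist (jointP P) (jointPiL θ') (dirac s0) t s1 * jointPiL θ' s1 a * g s1 a
      = ∑ s1, stateDist (jointP P) (jointPiL θ') (dirac s0) t s1 *
          ∑ a, jointPiL θ' s1 a * g s1 a := by
        refine Finset.sum_congr rfl fun s1 _ => ?_
        rw [Finset.mul_sum]
        exact Finset.sum_congr rfl fun a _ => by ring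
    _ = ∑ s1, stateDist (jointP P) (jointPiL θ') (dirac s0) t s1 * h2 s1 := by
        refine Finset.sum_congr rfl fun s1 _ => ?_
        congr 1
        exact action_marginal i θ' θ hθ' hθ hab g hg s1 s1 (fun _ _ => rfl)
    _ = ∑ s1, stateDist (jointP P) (jointPiL θ) (dirac s0) t s1 * h2 s1 :=
        dist_marginal i P hP θ θ' hθ hθ' hab s0 t h2 hh2
    _ = ∑ s1, ∑ a, stateDist (jointP P) (jointPiL θ) (dirac s0) t s1 * jointPiL θ s1 a * g s1 a := by
        refine Finset.sum_congr rfl fun s1 _ => ?_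
        rw [Finset.mul_sum]
        exact Finset.sum_congr rfl fun a _ => by ring

lemma expDisc_marginal (γ : ℝ) (P : ∀ j, S j → A j → S j → ℝ)
    (hP : ∀ j sj aj, P j sj aj ∈ stdSimplex ℝ (S j))
    (θ θ' : ∀ j, S j → A j → ℝ) (hθ : feasibleL θ) (hθ' : feasibleL θ')
    (hab : ∀ j, j ≠ i → θ' j = θ j) (s0 : ∀ j, S j)
    (g : (∀ j, S j) → (∀ j, A j) → ℝ)
    (hg : ∀ st b x y, g (Function.update st i x) (Function.update b i y) = g st b) :
    expDisc γ (jointP P) (jointPiL θ') (dirac s0) g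
      = expDisc γ (jointP P) (jointPiL θ) (dirac s0) g := by
  refine tsum_congr fun t => ?_
  rw [time_marginal i P hP θ θ' hθ hθ' hab s0 g hg t]

end Prod

lemma pair_split {N : ℕ} (i : Fin N) (R : Fin N → Fin N → ℝ)
    (hR : ∀ j, j ≠ i → R i j = R j i) :
    ∑ k, ∑ j ∈ Finset.univ.filter (fun j => j < k), R k j
      = ∑ j ∈ Finset.univ.erase i, R i j
        + ∑ k ∈ Finset.univ.erase i,
            ∑ j ∈ (Finset.univ.filter (fun j => j < k)).erase i, R k j := by
  classical
  have h1 : ∑ k, ∑ j ∈ Finset.univ.filter (fun j => j < k), R k j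
      = (∑ j ∈ Finset.univ.filter (fun j => j < i), R i j)
        + ∑ k ∈ Finset.univ.erase i, ∑ j ∈ Finset.univ.filter (fun j => j < k), R k j :=
    (Finset.add_sum_erase _ _ (Finset.mem_univ i)).symm
  have h2 : ∀ k ∈ Finset.univ.erase i, ∑ j ∈ Finset.univ.filter (fun j => j < k), R k j
      = (∑ j ∈ (Finset.univ.filter (fun j => j < k)).erase i, R k j)
        + (if i < k then R k i else 0) := by
    intro k _
    by_cases hik : i < k
    · rw [if_pos hik]
      exact (Finset.sum_erase_add _ _ (by simp [hik])).symm
    · rw [if_neg hik, add_zero, Finset.erase_eq_of_notMem (by simp [hik])]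
  have h3 : ∑ k ∈ Finset.univ.erase i, (if i < k then R k i else 0)
      = ∑ k ∈ Finset.univ.filter (fun k => i < k), R k i := by
    rw [Finset.sum_erase _ (by simp), ← Finset.sum_filter]
  have h4 : ∑ k ∈ Finset.univ.filter (fun k => i < k), R k i
      = ∑ k ∈ Finset.univ.filter (fun k => i < k), R i k := by
    refine Finset.sum_congr rfl fun k hk => ?_
    exact (hR k (ne_of_gt (Finset.mem_filter.mp hk).2)).symm
  have h5 : ∑ j ∈ Finset.univ.filter (fun j => j < i), R i j
      + ∑ k ∈ Finset.univ.filter (fun k => i < k), R i k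
      = ∑ j ∈ Finset.univ.erase i, R i j := by
    rw [← Finset.sum_filter_add_sum_filter_not (Finset.univ.erase i) (fun j => j < i) (R i)]
    congr 1
    · congr 1
      ext j
      simp only [Finset.mem_filter, Finset.mem_erase, Finset.mem_univ, true_and, and_true,
        Fin.lt_def, Fin.ext_iff, ne_eq]
      omega
    · congr 1
      ext j
      simp only [Finset.mem_filter, Finset.mem_erase, Finset.mem_univ, true_and, and_true,
        Fin.lt_def, Fin.ext_iff, ne_eq]
      omega
  rw [h1, Finset.sum_congr rfl h2, Finset.sum_add_distrib, h3, h4]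
  linarith [h5]



/-- **MPG construction from mixed rewards.** In a finite
product-structured Markov game where each agent's reward has the mixed form
`r_i = α r_i^self(s_i,a_i) + β ∑_{j ≠ i} r_ij(s_i,s_j,a_i,a_j)` with symmetric
pairwise terms, the game is a Markov potential game with potential
`φ(s,a) = α ∑ i, r_i^self(s_i,a_i) + β ∑ i, ∑_{j < i} r_ij`. -/
theorem mpg_construction_from_mixed_rewards
    {N : ℕ} {S A : Fin N → Type}
    [∀ i, Fintype (S i)] [∀ i, DecidableEq (S i)] [∀ i, Fintype (A i)]
    [∀ i, Nonempty (S i)] [∀ i, Nonempty (A i)]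
    (γ : ℝ) (hγ0 : 0 ≤ γ) (hγ1 : γ < 1)
    (P : ∀ i, S i → A i → S i → ℝ)
    (hP : ∀ i si ai, P i si ai ∈ stdSimplex ℝ (S i))
    (ρ : ∀ i, S i → ℝ) (hρ : ∀ i, ρ i ∈ stdSimplex ℝ (S i))
    (α β : ℝ)
    (rself : ∀ i, S i → A i → ℝ)
    (rpair : ∀ i j : Fin N, S i → S j → A i → A j → ℝ)
    -- symmetry of the pairwise rewards:
    (hsym : ∀ i j : Fin N, i ≠ j → ∀ si sj ai aj,
      rpair i j si sj ai aj = rpair j i sj si aj ai) :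
    ∀ i : Fin N, ∀ θ : ∀ j, S j → A j → ℝ, feasibleL θ →
      ∀ θi' : S i → A i → ℝ, (∀ si, θi' si ∈ stdSimplex ℝ (A i)) →
        ∀ s : ∀ j, S j,
          expDisc γ (jointP P) (jointPiL (Function.update θ i θi')) (dirac s)
              (fun st b => α * rself i (st i) (b i)
                + β * ∑ j ∈ Finset.univ.erase i,
                    rpair i j (st i) (st j) (b i) (b j))
            - expDisc γ (jointP P) (jointPiL θ) (dirac s)
              (fun st b => α * rself i (st i) (b i)
                + β * ∑ j ∈ Finset.univ.erase i,
                    rpair i j (st i) (st j) (b i) (b j))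
          = expDisc γ (jointP P) (jointPiL (Function.update θ i θi')) (dirac s)
              (fun st b => α * ∑ k, rself k (st k) (b k)
                + β * ∑ k, ∑ j ∈ Finset.univ.filter (fun j => j < k),
                    rpair k j (st k) (st j) (b k) (b j))
            - expDisc γ (jointP P) (jointPiL θ) (dirac s)
              (fun st b => α * ∑ k, rself k (st k) (b k)
                + β * ∑ k, ∑ j ∈ Finset.univ.filter (fun j => j < k),
                    rpair k j (st k) (st j) (b k) (b j)) := by
  intro i θ hθ θi' hθi' s
  classical
  set θ2 := Function.update θ i θi' with hθ2def
  have hθ2f : feasibleL θ2 := by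
    intro j sj
    by_cases h : j = i
    · subst h; simpa [hθ2def, Function.update_self] using hθi' sj
    · simpa [hθ2def, Function.update_of_ne h] using hθ j sj
  have hab : ∀ j, j ≠ i → θ2 j = θ j := fun j h => Function.update_of_ne h _ _
  set r : (∀ j, S j) → (∀ j, A j) → ℝ := fun st b => α * rself i (st i) (b i)
      + β * ∑ j ∈ Finset.univ.erase i, rpair i j (st i) (st j) (b i) (b j) with hrdef
  set g : (∀ j, S j) → (∀ j, A j) → ℝ := fun st b =>
      α * ∑ k ∈ Finset.univ.erase i, rself k (st k) (b k)
      + β * ∑ k ∈ Finset.univ.erase i,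
          ∑ j ∈ (Finset.univ.filter (fun j => j < k)).erase i,
            rpair k j (st k) (st j) (b k) (b j) with hgdef
  have hgind : ∀ st b x y,
      g (Function.update st i x) (Function.update b i y) = g st b := by
    intro st b x y
    simp only [hgdef]
    congr 1
    · congr 1
      refine Finset.sum_congr rfl fun k hk => ?_
      have hk' := Finset.ne_of_mem_erase hk
      rw [Function.update_of_ne hk', Function.update_of_ne hk']
    · congr 1
      refine Finset.sum_congr rfl fun k hk => ?_
      have hk' := Finset.ne_of_mem_erase hk
      refine Finset.sum_congr rfl fun j hj => ?_
      have hj' := Finset.ne_of_mem_erase hj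
      rw [Function.update_of_ne hk', Function.update_of_ne hk',
        Function.update_of_ne hj', Function.update_of_ne hj']
  have hφr : (fun (st : ∀ j, S j) (b : ∀ j, A j) => α * ∑ k, rself k (st k) (b k)
      + β * ∑ k, ∑ j ∈ Finset.univ.filter (fun j => j < k),
          rpair k j (st k) (st j) (b k) (b j))
      = fun st b => r st b + g st b := by
    funext st b
    have e1 : ∑ k, rself k (st k) (b k)
        = rself i (st i) (b i) + ∑ k ∈ Finset.univ.erase i, rself k (st k) (b k) :=
      (Finset.add_sum_erase _ _ (Finset.mem_univ i)).symm
    have e2 := pair_split i (fun k j => rpair k j (st k) (st j) (b k) (b j))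
      (fun j hj => hsym i j (Ne.symm hj) (st i) (st j) (b i) (b j))
    rw [e1, e2]
    simp only [hrdef, hgdef]
    ring
  have hProws := jointP_row P hP
  have hπ1 := jointPiL_row θ hθ
  have hπ2 := jointPiL_row θ2 hθ2f
  have hd : dirac s ∈ stdSimplex ℝ (∀ j, S j) := dirac_mem s
  rw [hφr]
  rw [expDisc_add hγ0 hγ1 hProws hπ2 hd r g, expDisc_add hγ0 hγ1 hProws hπ1 hd r g]
  have hge : expDisc γ (jointP P) (jointPiL θ2) (dirac s) g
      = expDisc γ (jointP P) (jointPiL θ) (dirac s) g :=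
    expDisc_marginal i γ P hP θ θ2 hθ hθ2f hab s g hgind
  rw [hge]
  ring
end

section
/- (Stationary policies are constrained stationary points of the potential) In a Markov potential game under direct policy parameterization, a policy θ* ∈ X is a first-order stationary policy of the game (i.e., (θ_i' − θ_i*)ᵀ ∇_{θ_i} J_i(θ*) ≤ 0 for every θ_i' ∈ X_i and every agent i) if and only if θ* satisfies the blockwise first-order optimality condition for the total potential function Φ over X: (θ_i' − θ_i*)ᵀ ∇_{θ_i} Φ(θ*) ≤ 0 for every θ_i' ∈ X_i and every agent i. -/
open scoped BigOperators

/-! Common framework for finite Markov games under direct policy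
parameterization.  Agents are indexed by `Fin N`, the state space `S` and the
action spaces `A i` are finite.  A policy profile is `θ : ∀ i, S → A i → ℝ`,
feasible when each `θ i s` lies in the probability simplex. -/

section MGDefs

variable {N : ℕ} {S : Type} {A : Fin N → Type}
variable [Fintype S] [∀ i, Fintype (A i)]

/-- Joint policy `π_θ(a|s) = ∏ i, θ_i(a_i|s)` induced by the per-agent
directly parameterized policies. -/
def jointPi (θ : ∀ i, S → A i → ℝ) : S → (∀ i, A i) → ℝ :=
  fun s a => ∏ i, θ i s (a i)

/-- Value function `V^θ(s) = E[∑ₜ γ^t f(s_t,a_t) | π_θ, s_0 = s]`. -/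
noncomputable def valueV [DecidableEq S] (γ : ℝ) (P : S → (∀ i, A i) → S → ℝ)
    (θ : ∀ i, S → A i → ℝ) (f : S → (∀ i, A i) → ℝ) (s : S) : ℝ :=
  expDisc γ P (jointPi θ) (dirac s) f

/-- Total objective `J(θ) = E_{s₀ ∼ ρ}[∑ₜ γ^t f(s_t,a_t) | π_θ]`. -/
noncomputable def Jtot (γ : ℝ) (P : S → (∀ i, A i) → S → ℝ) (ρ : S → ℝ)
    (θ : ∀ i, S → A i → ℝ) (f : S → (∀ i, A i) → ℝ) : ℝ :=
  expDisc γ P (jointPi θ) ρ f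

/-- The feasible set `X = X_1 × ⋯ × X_N`, `X_i = Δ(A_i)^S`. -/
def feasible (θ : ∀ i, S → A i → ℝ) : Prop :=
  ∀ i, ∀ s, θ i s ∈ stdSimplex ℝ (A i)

/-- Discounted state-visitation measure
`d_θ(s) = (1-γ) E_{s₀∼ρ} ∑ₜ γ^t Pr^θ(s_t = s | s₀)`. -/
noncomputable def visit (γ : ℝ) (P : S → (∀ i, A i) → S → ℝ)
    (θ : ∀ i, S → A i → ℝ) (ρ : S → ℝ) (s : S) : ℝ :=
  (1 - γ) * ∑' t : ℕ, γ ^ t * stateDist P (jointPi θ) ρ t s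

end MGDefs

section Aux

open Finset

variable {σ α : Type} [Fintype σ] [Fintype α]

lemma abs_sum_mul_f_le (G : σ → α → ℝ) (f : σ → α → ℝ) (F : ℝ) (hF : 0 ≤ F)
    (hf : ∀ s a, |f s a| ≤ F) :
    |∑ s, ∑ a, G s a * f s a| ≤ (∑ s, ∑ a, |G s a|) * F := by
  calc |∑ s, ∑ a, G s a * f s a|
      ≤ ∑ s, ∑ a, |G s a * f s a| := by
        refine (Finset.abs_sum_le_sum_abs _ _).trans (Finset.sum_le_sum fun s _ => ?_)
        exact Finset.abs_sum_le_sum_abs _ _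
    _ ≤ ∑ s, ∑ a, |G s a| * F := by
        refine Finset.sum_le_sum fun s _ => Finset.sum_le_sum fun a _ => ?_
        rw [abs_mul]
        exact mul_le_mul_of_nonneg_left (hf s a) (abs_nonneg _)
    _ = (∑ s, ∑ a, |G s a|) * F := by rw [Finset.sum_mul]; exact Finset.sum_congr rfl fun s _ => (Finset.sum_mul _ _ _).symm

lemma pair_prod_abs_bound (d d' : σ → ℝ) (π π' : σ → α → ℝ) (m δ : ℝ)
    (hπ : ∀ s, ∑ a, |π s a| ≤ m) (hδ : ∀ s, ∑ a, |π s a - π' s a| ≤ δ) :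
    ∑ s, ∑ a, |d s * π s a - d' s * π' s a|
      ≤ (∑ s, |d s - d' s|) * m + (∑ s, |d' s|) * δ := by
  have key : ∀ s, ∑ a, |d s * π s a - d' s * π' s a|
      ≤ |d s - d' s| * m + |d' s| * δ := by
    intro s
    calc ∑ a, |d s * π s a - d' s * π' s a|
        ≤ ∑ a, (|d s - d' s| * |π s a| + |d' s| * |π s a - π' s a|) := by
          refine Finset.sum_le_sum fun a _ => ?_
          have h : d s * π s a - d' s * π' s a
              = (d s - d' s) * π s a + d' s * (π s a - π' s a) := by ring
          rw [h]
          refine (abs_add_le _ _).trans (le_of_eq ?_)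
          rw [abs_mul, abs_mul]
      _ = |d s - d' s| * (∑ a, |π s a|) + |d' s| * (∑ a, |π s a - π' s a|) := by
          rw [Finset.sum_add_distrib, ← Finset.mul_sum, ← Finset.mul_sum]
      _ ≤ |d s - d' s| * m + |d' s| * δ :=
          add_le_add (mul_le_mul_of_nonneg_left (hπ s) (abs_nonneg _))
            (mul_le_mul_of_nonneg_left (hδ s) (abs_nonneg _))
  calc ∑ s, ∑ a, |d s * π s a - d' s * π' s a|
      ≤ ∑ s, (|d s - d' s| * m + |d' s| * δ) := Finset.sum_le_sum fun s _ => key s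
    _ = _ := by rw [Finset.sum_add_distrib, Finset.sum_mul, Finset.sum_mul]

lemma kernel_contract (P : σ → α → σ → ℝ) (hP : ∀ s a, P s a ∈ stdSimplex ℝ σ)
    (G : σ → α → ℝ) :
    ∑ s', |∑ s, ∑ a, G s a * P s a s'| ≤ ∑ s, ∑ a, |G s a| := by
  calc ∑ s', |∑ s, ∑ a, G s a * P s a s'|
      ≤ ∑ s', ∑ s, ∑ a, |G s a| * P s a s' := by
        refine Finset.sum_le_sum fun s' _ => ?_
        refine (Finset.abs_sum_le_sum_abs _ _).trans (Finset.sum_le_sum fun s _ => ?_)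
        refine (Finset.abs_sum_le_sum_abs _ _).trans (Finset.sum_le_sum fun a _ => ?_)
        rw [abs_mul, abs_of_nonneg ((hP s a).1 s')]
    _ = ∑ s, ∑ a, ∑ s', |G s a| * P s a s' := by
        rw [Finset.sum_comm]
        exact Finset.sum_congr rfl fun s _ => Finset.sum_comm
    _ = ∑ s, ∑ a, |G s a| := by
        refine Finset.sum_congr rfl fun s _ => Finset.sum_congr rfl fun a _ => ?_
        rw [← Finset.mul_sum, (hP s a).2, mul_one]

lemma stateDist_abs_le (P : σ → α → σ → ℝ) (hP : ∀ s a, P s a ∈ stdSimplex ℝ σ)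
    (π : σ → α → ℝ) (m R : ℝ) (hm : 0 ≤ m) (hπ : ∀ s, ∑ a, |π s a| ≤ m)
    (ρ : σ → ℝ) (hρ : ∑ s, |ρ s| ≤ R) :
    ∀ t, ∑ s, |stateDist P π ρ t s| ≤ R * m ^ t := by
  intro t
  induction t with
  | zero => simpa [stateDist] using hρ
  | succ t ih =>
    calc ∑ s', |stateDist P π ρ (t + 1) s'|
        = ∑ s', |∑ s, ∑ a, (stateDist P π ρ t s * π s a) * P s a s'| := rfl
      _ ≤ ∑ s, ∑ a, |stateDist P π ρ t s * π s a| := kernel_contract P hP _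
      _ = ∑ s, |stateDist P π ρ t s| * ∑ a, |π s a| := by
          refine Finset.sum_congr rfl fun s _ => ?_
          rw [Finset.mul_sum]
          exact Finset.sum_congr rfl fun a _ => abs_mul _ _
      _ ≤ ∑ s, |stateDist P π ρ t s| * m :=
          Finset.sum_le_sum fun s _ => mul_le_mul_of_nonneg_left (hπ s) (abs_nonneg _)
      _ = (∑ s, |stateDist P π ρ t s|) * m := (Finset.sum_mul _ _ _).symm
      _ ≤ (R * m ^ t) * m := mul_le_mul_of_nonneg_right ih hm
      _ = R * m ^ (t + 1) := by ring

lemma stateDist_sub_abs_le (P : σ → α → σ → ℝ) (hP : ∀ s a, P s a ∈ stdSimplex ℝ σ)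
    (π π' : σ → α → ℝ) (m δ : ℝ) (hm : 1 ≤ m)
    (hπ : ∀ s, ∑ a, |π s a| ≤ m) (hπ' : ∀ s, ∑ a, |π' s a| ≤ m)
    (hδ0 : 0 ≤ δ) (hδ : ∀ s, ∑ a, |π s a - π' s a| ≤ δ)
    (ρ : σ → ℝ) (hρ : ∑ s, |ρ s| ≤ 1) :
    ∀ t, ∑ s, |stateDist P π ρ t s - stateDist P π' ρ t s| ≤ t * m ^ t * δ := by
  have hm0 : 0 ≤ m := le_trans zero_le_one hm
  intro t
  induction t with
  | zero =>
    show ∑ s, |ρ s - ρ s| ≤ (0:ℕ) * m ^ 0 * δ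
    simp
  | succ t ih =>
    have hB : ∑ s, |stateDist P π' ρ t s| ≤ m ^ t := by
      simpa using stateDist_abs_le P hP π' m 1 hm0 hπ' ρ hρ t
    calc ∑ s', |stateDist P π ρ (t + 1) s' - stateDist P π' ρ (t + 1) s'|
        = ∑ s', |∑ s, ∑ a,
            (stateDist P π ρ t s * π s a - stateDist P π' ρ t s * π' s a) * P s a s'| := by
          refine Finset.sum_congr rfl fun s' _ => ?_
          have h : stateDist P π ρ (t + 1) s' - stateDist P π' ρ (t + 1) s'
              = ∑ s, ∑ a,
                (stateDist P π ρ t s * π s a - stateDist P π' ρ t s * π' s a) * P s a s' := by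
            show (∑ s, ∑ a, stateDist P π ρ t s * π s a * P s a s')
                - (∑ s, ∑ a, stateDist P π' ρ t s * π' s a * P s a s') = _
            rw [← Finset.sum_sub_distrib]
            refine Finset.sum_congr rfl fun s _ => ?_
            rw [← Finset.sum_sub_distrib]
            exact Finset.sum_congr rfl fun a _ => by ring
          rw [h]
      _ ≤ ∑ s, ∑ a, |stateDist P π ρ t s * π s a - stateDist P π' ρ t s * π' s a| :=
          kernel_contract P hP _
      _ ≤ (∑ s, |stateDist P π ρ t s - stateDist P π' ρ t s|) * m
            + (∑ s, |stateDist P π' ρ t s|) * δ :=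
          pair_prod_abs_bound _ _ _ _ _ _ hπ hδ
      _ ≤ (t * m ^ t * δ) * m + m ^ t * δ :=
          add_le_add (mul_le_mul_of_nonneg_right ih hm0)
            (mul_le_mul_of_nonneg_right hB hδ0)
      _ ≤ (t + 1 : ℕ) * m ^ (t + 1) * δ := by
          push_cast
          have h1 : m ^ t ≤ m ^ (t + 1) := pow_le_pow_right₀ hm (Nat.le_succ t)
          have h3 : (t:ℝ) * m ^ t * δ * m = (t:ℝ) * m ^ (t+1) * δ := by
            rw [pow_succ]; ring
          rw [h3]
          nlinarith [mul_le_mul_of_nonneg_right h1 hδ0]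

lemma summable_term (γ : ℝ) (hγ : 0 ≤ γ) (P : σ → α → σ → ℝ)
    (hP : ∀ s a, P s a ∈ stdSimplex ℝ σ)
    (π : σ → α → ℝ) (m R F : ℝ) (hm : 0 ≤ m) (hR : 0 ≤ R) (hF : 0 ≤ F)
    (hq : γ * m < 1)
    (hπ : ∀ s, ∑ a, |π s a| ≤ m) (ρ : σ → ℝ) (hρ : ∑ s, |ρ s| ≤ R)
    (f : σ → α → ℝ) (hf : ∀ s a, |f s a| ≤ F) :
    Summable (fun t : ℕ => γ ^ t * ∑ s, ∑ a, stateDist P π ρ t s * π s a * f s a) := by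
  have hgm : 0 ≤ γ * m := mul_nonneg hγ hm
  refine Summable.of_norm_bounded (g := fun t => (R * m * F) * (γ * m) ^ t)
    ((summable_geometric_of_lt_one hgm hq).mul_left _) (fun t => ?_)
  rw [Real.norm_eq_abs, abs_mul, abs_pow, abs_of_nonneg hγ]
  have hGG : ∑ s, ∑ a, |stateDist P π ρ t s * π s a| ≤ (R * m ^ t) * m := by
    calc ∑ s, ∑ a, |stateDist P π ρ t s * π s a|
        = ∑ s, |stateDist P π ρ t s| * ∑ a, |π s a| := by
          refine Finset.sum_congr rfl fun s _ => ?_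
          rw [Finset.mul_sum]
          exact Finset.sum_congr rfl fun a _ => abs_mul _ _
      _ ≤ ∑ s, |stateDist P π ρ t s| * m :=
          Finset.sum_le_sum fun s _ => mul_le_mul_of_nonneg_left (hπ s) (abs_nonneg _)
      _ = (∑ s, |stateDist P π ρ t s|) * m := (Finset.sum_mul _ _ _).symm
      _ ≤ (R * m ^ t) * m :=
          mul_le_mul_of_nonneg_right (stateDist_abs_le P hP π m R hm hπ ρ hρ t) hm
  have h1 : |∑ s, ∑ a, stateDist P π ρ t s * π s a * f s a| ≤ ((R * m ^ t) * m) * F := by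
    refine (abs_sum_mul_f_le _ f F hF hf).trans ?_
    exact mul_le_mul_of_nonneg_right hGG hF
  calc γ ^ t * |∑ s, ∑ a, stateDist P π ρ t s * π s a * f s a|
      ≤ γ ^ t * (((R * m ^ t) * m) * F) :=
        mul_le_mul_of_nonneg_left h1 (pow_nonneg hγ t)
    _ = (R * m * F) * (γ * m) ^ t := by rw [mul_pow]; ring

lemma inner_collapse (d : σ → ℝ) (π : σ → α → ℝ) (f : σ → α → ℝ) :
    ∑ s, ∑ a, d s * π s a * f s a = ∑ s, d s * ∑ a, π s a * f s a := by
  refine Finset.sum_congr rfl fun s _ => ?_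
  rw [Finset.mul_sum]
  exact Finset.sum_congr rfl fun a _ => by ring

lemma stateDist_dirac_expand [DecidableEq σ] (P : σ → α → σ → ℝ) (π : σ → α → ℝ)
    (ρ : σ → ℝ) :
    ∀ t s, stateDist P π ρ t s = ∑ s0, ρ s0 * stateDist P π (dirac s0) t s := by
  intro t
  induction t with
  | zero =>
    intro s
    show ρ s = ∑ s0, ρ s0 * dirac s0 s
    simp [dirac, mul_ite]
  | succ t ih =>
    intro s'
    show (∑ s, ∑ a, stateDist P π ρ t s * π s a * P s a s')
        = ∑ s0, ρ s0 * ∑ s, ∑ a, stateDist P π (dirac s0) t s * π s a * P s a s'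
    calc ∑ s, ∑ a, stateDist P π ρ t s * π s a * P s a s'
        = ∑ s, ∑ s0, ∑ a, ρ s0 * (stateDist P π (dirac s0) t s * π s a * P s a s') := by
          refine Finset.sum_congr rfl fun s _ => ?_
          rw [Finset.sum_comm]
          refine Finset.sum_congr rfl fun a _ => ?_
          rw [ih s, Finset.sum_mul, Finset.sum_mul]
          exact Finset.sum_congr rfl fun s0 _ => by ring
      _ = ∑ s0, ∑ s, ∑ a, ρ s0 * (stateDist P π (dirac s0) t s * π s a * P s a s') :=
          Finset.sum_comm
      _ = ∑ s0, ρ s0 * ∑ s, ∑ a, stateDist P π (dirac s0) t s * π s a * P s a s' := by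
          refine Finset.sum_congr rfl fun s0 _ => ?_
          rw [Finset.mul_sum]
          exact Finset.sum_congr rfl fun s _ => (Finset.mul_sum _ _ _).symm

end Aux

section Spec

variable {N : ℕ} {S : Type} {A : Fin N → Type}
variable [Fintype S] [∀ i, Fintype (A i)]

lemma sum_abs_jointPi_eq (θ : ∀ j, S → A j → ℝ) (s : S) :
    ∑ a, |jointPi θ s a| = ∏ j, ∑ b, |θ j s b| := by
  classical
  show ∑ a : ∀ j, A j, |∏ j, θ j s (a j)| = _
  simp only [Finset.abs_prod]
  rw [Finset.prod_univ_sum, Fintype.piFinset_univ]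

lemma jointPi_update (θs : ∀ j, S → A j → ℝ) (i : Fin N) (x : S → A i → ℝ)
    (s : S) (a : ∀ j, A j) :
    jointPi (Function.update θs i x) s a
      = x s (a i) * ∏ j ∈ Finset.univ.erase i, θs j s (a j) := by
  classical
  show (∏ j, Function.update θs i x j s (a j)) = _
  rw [← Finset.mul_prod_erase Finset.univ _ (Finset.mem_univ i)]
  congr 1
  · rw [Function.update_self]
  · exact Finset.prod_congr rfl fun j hj => by
      rw [Function.update_of_ne (Finset.ne_of_mem_erase hj)]

lemma sum_abs_jointPi_update (θs : ∀ j, S → A j → ℝ) (hθs : feasible θs)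
    (i : Fin N) (z : S → A i → ℝ) (s : S) :
    ∑ a, |jointPi (Function.update θs i z) s a| = ∑ b, |z s b| := by
  classical
  rw [sum_abs_jointPi_eq]
  rw [← Finset.mul_prod_erase Finset.univ _ (Finset.mem_univ i)]
  have h1 : ∑ b, |Function.update θs i z i s b| = ∑ b, |z s b| := by
    rw [Function.update_self]
  have h2 : (∏ j ∈ Finset.univ.erase i, ∑ b, |Function.update θs i z j s b|) = 1 :=
    Finset.prod_eq_one fun j hj => by
      rw [Function.update_of_ne (Finset.ne_of_mem_erase hj)]
      rw [Finset.sum_congr rfl fun b _ => abs_of_nonneg ((hθs j s).1 b)]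
      exact (hθs j s).2
  rw [h1, h2, mul_one]

lemma jointPi_update_sub (θs : ∀ j, S → A j → ℝ) (i : Fin N)
    (x y : S → A i → ℝ) (s : S) (a : ∀ j, A j) :
    jointPi (Function.update θs i x) s a - jointPi (Function.update θs i y) s a
      = jointPi (Function.update θs i (x - y)) s a := by
  simp only [jointPi_update, Pi.sub_apply]
  ring

lemma differentiable_eval (s : S) (i : Fin N) (b : A i) :
    Differentiable ℝ (fun x : S → A i → ℝ => x s b) :=
  ((ContinuousLinearMap.proj b : (A i → ℝ) →L[ℝ] ℝ).comp
    (ContinuousLinearMap.proj s : (S → A i → ℝ) →L[ℝ] (A i → ℝ))).differentiable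

lemma differentiable_jointPi_update (θs : ∀ j, S → A j → ℝ) (i : Fin N)
    (s : S) (a : ∀ j, A j) :
    Differentiable ℝ (fun x : S → A i → ℝ => jointPi (Function.update θs i x) s a) := by
  have h : (fun x : S → A i → ℝ => jointPi (Function.update θs i x) s a)
      = fun x => x s (a i) * ∏ j ∈ Finset.univ.erase i, θs j s (a j) :=
    funext fun x => jointPi_update θs i x s a
  rw [h]
  exact (differentiable_eval s i (a i)).mul_const _

lemma differentiable_stateDist (P : S → (∀ j, A j) → S → ℝ) (ρ : S → ℝ)
    (θs : ∀ j, S → A j → ℝ) (i : Fin N) :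
    ∀ (t : ℕ) (s : S),
      Differentiable ℝ
        (fun x : S → A i → ℝ => stateDist P (jointPi (Function.update θs i x)) ρ t s) := by
  intro t
  induction t with
  | zero => intro s; exact differentiable_const _
  | succ t ih =>
    intro s'
    have h : (fun x : S → A i → ℝ =>
        stateDist P (jointPi (Function.update θs i x)) ρ (t+1) s')
        = fun x => ∑ s, ∑ a, stateDist P (jointPi (Function.update θs i x)) ρ t s
            * jointPi (Function.update θs i x) s a * P s a s' := rfl
    rw [h]
    refine Differentiable.fun_sum fun s _ => Differentiable.fun_sum fun a _ => ?_
    exact ((ih s).mul (differentiable_jointPi_update θs i s a)).mul_const _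

lemma differentiableAt_Jtot_update
    [Nonempty S] [∀ i, Nonempty (A i)]
    (γ : ℝ) (hγ0 : 0 ≤ γ) (hγ1 : γ < 1)
    (P : S → (∀ j, A j) → S → ℝ) (hP : ∀ s a, P s a ∈ stdSimplex ℝ S)
    (ρ : S → ℝ) (hρ : ρ ∈ stdSimplex ℝ S)
    (θs : ∀ j, S → A j → ℝ) (hθs : feasible θs) (i : Fin N)
    (f : S → (∀ j, A j) → ℝ) :
    DifferentiableAt ℝ
      (fun x : S → A i → ℝ => Jtot γ P ρ (Function.update θs i x) f) (θs i) := by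
  classical
  set K : ℝ := (Fintype.card (A i) : ℝ) with hKdef
  have hK : 1 ≤ K := by
    have h : 1 ≤ Fintype.card (A i) := Fintype.card_pos (α := A i)
    rw [hKdef]
    exact_mod_cast h
  have hK0 : 0 < K := lt_of_lt_of_le one_pos hK
  set ε : ℝ := (1 - γ) / ((γ + 1) * K) with hεdef
  have hε0 : 0 < ε := by
    apply div_pos (by linarith)
    positivity
  set m : ℝ := 1 + K * ε with hmdef
  have hKε : (γ + 1) * (K * ε) = 1 - γ := by
    rw [hεdef]
    field_simp
  have hm1 : 1 ≤ m := by nlinarith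
  have hm0 : 0 ≤ m := le_trans zero_le_one hm1
  have hq : γ * m < 1 := by nlinarith
  set F : ℝ := ∑ s, ∑ a, |f s a| with hFdef
  have hF0 : 0 ≤ F := Finset.sum_nonneg fun s _ => Finset.sum_nonneg fun a _ => abs_nonneg _
  have hfF : ∀ s a, |f s a| ≤ F := by
    intro s a
    calc |f s a| ≤ ∑ a, |f s a| :=
          Finset.single_le_sum (f := fun a => |f s a|) (fun a _ => abs_nonneg _)
            (Finset.mem_univ a)
      _ ≤ F := Finset.single_le_sum
          (f := fun s => ∑ a, |f s a|)
          (fun s _ => Finset.sum_nonneg fun a _ => abs_nonneg _) (Finset.mem_univ s)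
  have hρ1 : ∑ s, |ρ s| ≤ 1 := by
    rw [Finset.sum_congr rfl fun s _ => abs_of_nonneg (hρ.1 s)]
    exact le_of_eq hρ.2
  -- coordinates of points in the ball
  have hcoord : ∀ x : S → A i → ℝ, ∀ s b, |x s b| ≤ ‖x‖ := by
    intro x s b
    calc |x s b| = ‖x s b‖ := rfl
      _ ≤ ‖x s‖ := norm_le_pi_norm (x s) b
      _ ≤ ‖x‖ := norm_le_pi_norm x s
  have hθsum : ∀ s, ∑ b, |θs i s b| = 1 := by
    intro s
    rw [Finset.sum_congr rfl fun b _ => abs_of_nonneg ((hθs i s).1 b)]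
    exact (hθs i s).2
  have hball : ∀ x ∈ Metric.ball (θs i) ε, ∀ s,
      ∑ a, |jointPi (Function.update θs i x) s a| ≤ m := by
    intro x hx s
    rw [sum_abs_jointPi_update θs hθs i x s]
    have hxd : ‖x - θs i‖ ≤ ε := le_of_lt (by
      rw [← dist_eq_norm]; exact Metric.mem_ball.1 hx)
    calc ∑ b, |x s b| ≤ ∑ b, (|θs i s b| + |x s b - θs i s b|) := by
          refine Finset.sum_le_sum fun b _ => ?_
          calc |x s b| = |θs i s b + (x s b - θs i s b)| := by ring_nf
            _ ≤ |θs i s b| + |x s b - θs i s b| := abs_add_le _ _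
      _ = 1 + ∑ b, |x s b - θs i s b| := by
          rw [Finset.sum_add_distrib, hθsum s]
      _ ≤ 1 + ∑ b : A i, ε := by
          refine add_le_add_right (Finset.sum_le_sum fun b _ => ?_) 1
          calc |x s b - θs i s b| = |(x - θs i) s b| := by simp
            _ ≤ ‖x - θs i‖ := hcoord _ s b
            _ ≤ ε := hxd
      _ = m := by
          rw [Finset.sum_const, Finset.card_univ, nsmul_eq_mul, hmdef, hKdef]
  have hdiff : ∀ x y : S → A i → ℝ, ∀ s,
      ∑ a, |jointPi (Function.update θs i x) s a - jointPi (Function.update θs i y) s a|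
        ≤ K * ‖x - y‖ := by
    intro x y s
    rw [Finset.sum_congr rfl fun a _ => congrArg abs (jointPi_update_sub θs i x y s a)]
    rw [sum_abs_jointPi_update θs hθs i (x - y) s]
    calc ∑ b, |(x - y) s b| ≤ ∑ b : A i, ‖x - y‖ :=
          Finset.sum_le_sum fun b _ => hcoord (x - y) s b
      _ = K * ‖x - y‖ := by
          rw [Finset.sum_const, Finset.card_univ, nsmul_eq_mul, hKdef]
  -- the series and bounds
  set term : ℕ → (S → A i → ℝ) → ℝ := fun t x =>
    γ ^ t * ∑ s, ∑ a, stateDist P (jointPi (Function.update θs i x)) ρ t s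
      * jointPi (Function.update θs i x) s a * f s a with htermdef
  have hterm_diff : ∀ t, Differentiable ℝ (term t) := by
    intro t
    refine Differentiable.const_mul ?_ _
    refine Differentiable.fun_sum fun s _ => Differentiable.fun_sum fun a _ => ?_
    exact ((differentiable_stateDist P ρ θs i t s).mul
      (differentiable_jointPi_update θs i s a)).mul_const _
  set u : ℕ → ℝ := fun t => (m * F * K) * ((t : ℝ) * (γ * m) ^ t + (γ * m) ^ t) with hudef
  have hu0 : ∀ t, 0 ≤ u t := by
    intro t
    have : (0:ℝ) ≤ (γ * m) ^ t := pow_nonneg (mul_nonneg hγ0 hm0) t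
    have ht : (0:ℝ) ≤ (t:ℝ) := Nat.cast_nonneg t
    positivity
  have hu : Summable u := by
    have hgm : ‖γ * m‖ < 1 := by
      rw [Real.norm_eq_abs, abs_of_nonneg (mul_nonneg hγ0 hm0)]; exact hq
    have h1 : Summable (fun t : ℕ => (t : ℝ) * (γ * m) ^ t) := by
      have := summable_pow_mul_geometric_of_norm_lt_one 1 hgm (R := ℝ)
      simpa using this
    have h2 : Summable (fun t : ℕ => (γ * m) ^ t) :=
      summable_geometric_of_lt_one (mul_nonneg hγ0 hm0) hq
    exact (h1.add h2).mul_left _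
  -- Lipschitz estimate on the ball
  have hlip : ∀ t, ∀ x ∈ Metric.ball (θs i) ε, ∀ y ∈ Metric.ball (θs i) ε,
      |term t x - term t y| ≤ u t * ‖x - y‖ := by
    intro t x hx y hy
    set πx := jointPi (Function.update θs i x) with hπx
    set πy := jointPi (Function.update θs i y) with hπy
    set δ : ℝ := K * ‖x - y‖ with hδdef
    have hδ0 : 0 ≤ δ := mul_nonneg (le_of_lt hK0) (norm_nonneg _)
    have hsub : term t x - term t y
        = γ ^ t * ∑ s, ∑ a,
            (stateDist P πx ρ t s * πx s a - stateDist P πy ρ t s * πy s a) * f s a := by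
      rw [htermdef]
      simp only
      rw [← mul_sub]
      congr 1
      rw [← Finset.sum_sub_distrib]
      refine Finset.sum_congr rfl fun s _ => ?_
      rw [← Finset.sum_sub_distrib]
      exact Finset.sum_congr rfl fun a _ => by ring
    have hA : ∑ s, |stateDist P πx ρ t s - stateDist P πy ρ t s| ≤ t * m ^ t * δ :=
      stateDist_sub_abs_le P hP πx πy m δ hm1 (hball x hx) (hball y hy) hδ0
        (fun s => hdiff x y s) ρ hρ1 t
    have hB : ∑ s, |stateDist P πy ρ t s| ≤ m ^ t := by
      simpa using stateDist_abs_le P hP πy m 1 hm0 (hball y hy) ρ hρ1 t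
    have hG : ∑ s, ∑ a, |stateDist P πx ρ t s * πx s a - stateDist P πy ρ t s * πy s a|
        ≤ (t * m ^ t * δ) * m + m ^ t * δ := by
      refine (pair_prod_abs_bound _ _ _ _ _ _ (hball x hx) (fun s => hdiff x y s)).trans ?_
      exact add_le_add (mul_le_mul_of_nonneg_right hA hm0)
        (mul_le_mul_of_nonneg_right hB hδ0)
    calc |term t x - term t y|
        = γ ^ t * |∑ s, ∑ a,
            (stateDist P πx ρ t s * πx s a - stateDist P πy ρ t s * πy s a) * f s a| := by
          rw [hsub, abs_mul, abs_pow, abs_of_nonneg hγ0]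
      _ ≤ γ ^ t * (((t * m ^ t * δ) * m + m ^ t * δ) * F) := by
          refine mul_le_mul_of_nonneg_left ?_ (pow_nonneg hγ0 t)
          refine (abs_sum_mul_f_le _ f F hF0 hfF).trans ?_
          exact mul_le_mul_of_nonneg_right hG hF0
      _ ≤ γ ^ t * (((↑t * m ^ t * δ) * m + (m ^ t * m) * δ) * F) := by
          refine mul_le_mul_of_nonneg_left (mul_le_mul_of_nonneg_right ?_ hF0)
            (pow_nonneg hγ0 t)
          refine add_le_add_right (mul_le_mul_of_nonneg_right ?_ hδ0) _
          exact le_mul_of_one_le_right (pow_nonneg hm0 t) hm1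
      _ = u t * ‖x - y‖ := by
          rw [hudef, hδdef]
          simp only
          rw [mul_pow]
          ring
  -- assemble via hasFDerivAt_tsum_of_isPreconnected
  have hmem : θs i ∈ Metric.ball (θs i) ε := Metric.mem_ball_self hε0
  have hf0 : Summable (fun t => term t (θs i)) := by
    refine summable_term γ hγ0 P hP (jointPi (Function.update θs i (θs i))) 1 1 F
      zero_le_one zero_le_one hF0 (by linarith) ?_ ρ hρ1 f hfF
    intro s
    rw [sum_abs_jointPi_update θs hθs i (θs i) s]
    exact le_of_eq (hθsum s)
  have hmain : HasFDerivAt (fun y => ∑' t, term t y)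
      (∑' t, fderiv ℝ (term t) (θs i)) (θs i) := by
    refine hasFDerivAt_tsum_of_isPreconnected hu Metric.isOpen_ball
      ((convex_ball (θs i) ε).isPreconnected)
      (fun t x _ => ((hterm_diff t) x).hasFDerivAt)
      (fun t x hx => ?_) hmem hf0 hmem
    have hnn : 0 ≤ u t := hu0 t
    have : ‖fderiv ℝ (term t) x‖ ≤ ((u t).toNNReal : ℝ) := by
      refine norm_fderiv_le_of_lipschitzOn ℝ (Metric.isOpen_ball.mem_nhds hx) ?_
      rw [lipschitzOnWith_iff_dist_le_mul]
      intro a ha b hb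
      rw [Real.dist_eq, dist_eq_norm, Real.coe_toNNReal _ hnn]
      exact hlip t a ha b hb
    rwa [Real.coe_toNNReal _ hnn] at this
  have heq : (fun x : S → A i → ℝ => Jtot γ P ρ (Function.update θs i x) f)
      = fun y => ∑' t, term t y := rfl
  rw [heq]
  exact hmain.differentiableAt

end Spec

section Spec2

variable {N : ℕ} {S : Type} {A : Fin N → Type}
variable [Fintype S] [∀ i, Fintype (A i)]

lemma sum_abs_jointPi_feasible (θ : ∀ j, S → A j → ℝ) (hθ : feasible θ) (s : S) :
    ∑ a, |jointPi θ s a| = 1 := by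
  rw [sum_abs_jointPi_eq]
  refine Finset.prod_eq_one fun j _ => ?_
  rw [Finset.sum_congr rfl fun b _ => abs_of_nonneg ((hθ j s).1 b)]
  exact (hθ j s).2

lemma feasible_update (θs : ∀ j, S → A j → ℝ) (hθs : feasible θs) (i : Fin N)
    (x : S → A i → ℝ) (hx : ∀ s, x s ∈ stdSimplex ℝ (A i)) :
    feasible (Function.update θs i x) := by
  intro j s
  rcases eq_or_ne j i with rfl | hne
  · rw [Function.update_self]; exact hx s
  · rw [Function.update_of_ne hne]; exact hθs j s

lemma Jtot_decomp [DecidableEq S] (γ : ℝ) (hγ0 : 0 ≤ γ) (hγ1 : γ < 1)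
    (P : S → (∀ j, A j) → S → ℝ) (hP : ∀ s a, P s a ∈ stdSimplex ℝ S)
    (ρ : S → ℝ) (hρ : ρ ∈ stdSimplex ℝ S)
    (θ : ∀ j, S → A j → ℝ) (hθ : feasible θ) (f : S → (∀ j, A j) → ℝ) :
    Jtot γ P ρ θ f = ∑ s0, ρ s0 * valueV γ P θ f s0 := by
  classical
  set F : ℝ := ∑ s, ∑ a, |f s a| with hFdef
  have hF0 : 0 ≤ F := Finset.sum_nonneg fun s _ => Finset.sum_nonneg fun a _ => abs_nonneg _
  have hfF : ∀ s a, |f s a| ≤ F := by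
    intro s a
    calc |f s a| ≤ ∑ a, |f s a| :=
          Finset.single_le_sum (f := fun a => |f s a|) (fun a _ => abs_nonneg _)
            (Finset.mem_univ a)
      _ ≤ F := Finset.single_le_sum
          (f := fun s => ∑ a, |f s a|)
          (fun s _ => Finset.sum_nonneg fun a _ => abs_nonneg _) (Finset.mem_univ s)
  have hπ1 : ∀ s, ∑ a, |jointPi θ s a| ≤ 1 :=
    fun s => le_of_eq (sum_abs_jointPi_feasible θ hθ s)
  have hd : ∀ s0 : S, ∑ s, |dirac s0 s| ≤ 1 := by
    intro s0
    have : ∀ s : S, |dirac s0 s| = if s = s0 then (1:ℝ) else 0 := by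
      intro s; by_cases h : s = s0 <;> simp [dirac, h]
    rw [Finset.sum_congr rfl fun s _ => this s]
    simp
  have hsum : ∀ s0 : S, Summable (fun t : ℕ => γ ^ t *
      ∑ s, ∑ a, stateDist P (jointPi θ) (dirac s0) t s * jointPi θ s a * f s a) :=
    fun s0 => summable_term γ hγ0 P hP (jointPi θ) 1 1 F
      zero_le_one zero_le_one hF0 (by linarith) hπ1 _ (hd s0) f hfF
  show (∑' t : ℕ, γ ^ t * ∑ s, ∑ a, stateDist P (jointPi θ) ρ t s * jointPi θ s a * f s a)
      = ∑ s0, ρ s0 * ∑' t : ℕ, γ ^ t *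
          ∑ s, ∑ a, stateDist P (jointPi θ) (dirac s0) t s * jointPi θ s a * f s a
  rw [Finset.sum_congr rfl (fun s0 _ => (tsum_mul_left (a := ρ s0)).symm)]
  rw [← Summable.tsum_finsetSum (fun s0 _ => (hsum s0).mul_left (ρ s0))]
  refine tsum_congr fun t => ?_
  calc γ ^ t * ∑ s, ∑ a, stateDist P (jointPi θ) ρ t s * jointPi θ s a * f s a
      = γ ^ t * ∑ s, stateDist P (jointPi θ) ρ t s * ∑ a, jointPi θ s a * f s a := by
        rw [inner_collapse]
    _ = γ ^ t * ∑ s, (∑ s0, ρ s0 * stateDist P (jointPi θ) (dirac s0) t s)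
          * ∑ a, jointPi θ s a * f s a := by
        rw [Finset.sum_congr rfl fun s _ => by
          rw [stateDist_dirac_expand P (jointPi θ) ρ t s]]
    _ = γ ^ t * ∑ s, ∑ s0, ρ s0 * stateDist P (jointPi θ) (dirac s0) t s
          * ∑ a, jointPi θ s a * f s a := by
        rw [Finset.sum_congr rfl fun s _ => Finset.sum_mul _ _ _]
    _ = γ ^ t * ∑ s0, ∑ s, ρ s0 * stateDist P (jointPi θ) (dirac s0) t s
          * ∑ a, jointPi θ s a * f s a := by rw [Finset.sum_comm]
    _ = ∑ s0, ρ s0 * (γ ^ t *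
          ∑ s, ∑ a, stateDist P (jointPi θ) (dirac s0) t s * jointPi θ s a * f s a) := by
        rw [Finset.mul_sum]
        refine Finset.sum_congr rfl fun s0 _ => ?_
        rw [inner_collapse, Finset.mul_sum, Finset.mul_sum, Finset.mul_sum]
        exact Finset.sum_congr rfl fun s _ => by ring

lemma key_deriv_eq [DecidableEq S] [Nonempty S] [∀ i, Nonempty (A i)]
    (γ : ℝ) (hγ0 : 0 ≤ γ) (hγ1 : γ < 1)
    (P : S → (∀ j, A j) → S → ℝ) (hP : ∀ s a, P s a ∈ stdSimplex ℝ S)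
    (r : Fin N → S → (∀ j, A j) → ℝ)
    (ρ : S → ℝ) (hρ : ρ ∈ stdSimplex ℝ S)
    (φ : S → (∀ j, A j) → ℝ)
    (hMPG : ∀ i : Fin N, ∀ θ : ∀ j, S → A j → ℝ, feasible θ →
      ∀ θi' : S → A i → ℝ, (∀ s, θi' s ∈ stdSimplex ℝ (A i)) → ∀ s : S,
        valueV γ P (Function.update θ i θi') (r i) s - valueV γ P θ (r i) s
          = valueV γ P (Function.update θ i θi') φ s - valueV γ P θ φ s)
    (θs : ∀ i, S → A i → ℝ) (hθs : feasible θs)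
    (i : Fin N) (θi' : S → A i → ℝ) (hθi' : ∀ s, θi' s ∈ stdSimplex ℝ (A i)) :
    fderiv ℝ (fun x : S → A i → ℝ =>
        Jtot γ P ρ (Function.update θs i x) (r i)) (θs i) (θi' - θs i)
      = fderiv ℝ (fun x : S → A i → ℝ =>
        Jtot γ P ρ (Function.update θs i x) φ) (θs i) (θi' - θs i) := by
  classical
  have hdJr := differentiableAt_Jtot_update γ hγ0 hγ1 P hP ρ hρ θs hθs i (r i)
  have hdJφ := differentiableAt_Jtot_update γ hγ0 hγ1 P hP ρ hρ θs hθs i φ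
  have hupself : Function.update θs i (θs i) = θs := Function.update_eq_self i θs
  have hconst : ∀ x : S → A i → ℝ, (∀ s, x s ∈ stdSimplex ℝ (A i)) →
      Jtot γ P ρ (Function.update θs i x) (r i) - Jtot γ P ρ θs (r i)
        = Jtot γ P ρ (Function.update θs i x) φ - Jtot γ P ρ θs φ := by
    intro x hx
    have hfx : feasible (Function.update θs i x) := feasible_update θs hθs i x hx
    rw [Jtot_decomp γ hγ0 hγ1 P hP ρ hρ _ hfx (r i),
        Jtot_decomp γ hγ0 hγ1 P hP ρ hρ θs hθs (r i),
        Jtot_decomp γ hγ0 hγ1 P hP ρ hρ _ hfx φ,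
        Jtot_decomp γ hγ0 hγ1 P hP ρ hρ θs hθs φ,
        ← Finset.sum_sub_distrib, ← Finset.sum_sub_distrib]
    refine Finset.sum_congr rfl fun s0 _ => ?_
    rw [← mul_sub, ← mul_sub, hMPG i θs hθs x hx s0]
  set v : S → A i → ℝ := θi' - θs i with hvdef
  -- derivative of the composed path
  have hL0 : θs i + (0:ℝ) • v = θs i := by simp
  have hvL : HasDerivAt (fun tt : ℝ => θs i + tt • v) v 0 := by
    have h1 : HasDerivAt (fun tt : ℝ => tt • v) ((1:ℝ) • v) 0 :=
      (hasDerivAt_id (0:ℝ)).smul_const v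
    simpa using h1.const_add (θs i)
  set D := (fderiv ℝ (fun x : S → A i → ℝ =>
      Jtot γ P ρ (Function.update θs i x) (r i)) (θs i)
    - fderiv ℝ (fun x : S → A i → ℝ => Jtot γ P ρ (Function.update θs i x) φ) (θs i))
    with hDdef
  have hg : HasFDerivAt (fun x : S → A i → ℝ =>
        Jtot γ P ρ (Function.update θs i x) (r i) - Jtot γ P ρ (Function.update θs i x) φ)
      D (θs i) := hdJr.hasFDerivAt.sub hdJφ.hasFDerivAt
  have hg' : HasFDerivAt (fun x : S → A i → ℝ =>
        Jtot γ P ρ (Function.update θs i x) (r i) - Jtot γ P ρ (Function.update θs i x) φ)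
      D (θs i + (0:ℝ) • v) := by rw [hL0]; exact hg
  have hcomp : HasDerivAt (fun tt : ℝ =>
      Jtot γ P ρ (Function.update θs i (θs i + tt • v)) (r i)
        - Jtot γ P ρ (Function.update θs i (θs i + tt • v)) φ) (D v) 0 :=
    by have h := hg'.comp_hasDerivAt 0 hvL; exact h
  -- the path stays in the simplex on [0,1]
  have hmemseg : ∀ tt ∈ Set.Icc (0:ℝ) 1, ∀ s, (θs i + tt • v) s ∈ stdSimplex ℝ (A i) := by
    intro tt htt s
    have hz : (θs i + tt • v) s = (1 - tt) • θs i s + tt • θi' s := by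
      funext b
      simp only [Pi.add_apply, Pi.smul_apply, hvdef, Pi.sub_apply, smul_eq_mul]
      ring
    rw [hz]
    exact convex_stdSimplex ℝ (A i) (hθs i s) (hθi' s)
      (by linarith [htt.2]) htt.1 (by ring)
  have hconstIcc : ∀ tt ∈ Set.Icc (0:ℝ) 1,
      Jtot γ P ρ (Function.update θs i (θs i + tt • v)) (r i)
        - Jtot γ P ρ (Function.update θs i (θs i + tt • v)) φ
      = Jtot γ P ρ θs (r i) - Jtot γ P ρ θs φ := by
    intro tt htt
    have := hconst (θs i + tt • v) (hmemseg tt htt)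
    linarith
  have hmem0 : (0:ℝ) ∈ Set.Icc (0:ℝ) 1 := ⟨le_refl 0, zero_le_one⟩
  have hW1 : HasDerivWithinAt (fun tt : ℝ =>
      Jtot γ P ρ (Function.update θs i (θs i + tt • v)) (r i)
        - Jtot γ P ρ (Function.update θs i (θs i + tt • v)) φ)
      (D v) (Set.Icc (0:ℝ) 1) 0 := by
    exact hcomp.hasDerivWithinAt
  have hW2 : HasDerivWithinAt (fun tt : ℝ =>
      Jtot γ P ρ (Function.update θs i (θs i + tt • v)) (r i)
        - Jtot γ P ρ (Function.update θs i (θs i + tt • v)) φ)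
      0 (Set.Icc (0:ℝ) 1) 0 := by
    refine (hasDerivWithinAt_const (0:ℝ) (Set.Icc (0:ℝ) 1)
      (Jtot γ P ρ θs (r i) - Jtot γ P ρ θs φ)).congr hconstIcc (hconstIcc 0 hmem0)
  have hud : UniqueDiffWithinAt ℝ (Set.Icc (0:ℝ) 1) 0 :=
    (uniqueDiffOn_Icc zero_lt_one) 0 hmem0
  have hzero : D v = 0 := by
    have e1 := hW1.derivWithin hud
    have e2 := hW2.derivWithin hud
    rw [e1] at e2
    exact e2
  have := ContinuousLinearMap.sub_apply (fderiv ℝ (fun x : S → A i → ℝ =>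
      Jtot γ P ρ (Function.update θs i x) (r i)) (θs i))
    (fderiv ℝ (fun x : S → A i → ℝ => Jtot γ P ρ (Function.update θs i x) φ) (θs i)) v
  rw [hDdef] at hzero
  rw [this] at hzero
  linarith [hzero]

end Spec2
/-- **Stationary policies are constrained stationary points of
the potential.** In a Markov potential game under direct policy
parameterization, a feasible policy is a first-order stationary policy of the
game if and only if it satisfies the blockwise first-order optimality
condition for the total potential function `Φ` over `X`. -/
theorem stationary_iff_blockwise_stationary_potential
    {N : ℕ} {S : Type} {A : Fin N → Type}
    [Fintype S] [DecidableEq S] [Nonempty S]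
    [∀ i, Fintype (A i)] [∀ i, Nonempty (A i)]
    (γ : ℝ) (hγ0 : 0 ≤ γ) (hγ1 : γ < 1)
    (P : S → (∀ i, A i) → S → ℝ) (hP : ∀ s a, P s a ∈ stdSimplex ℝ S)
    (r : Fin N → S → (∀ i, A i) → ℝ)
    (ρ : S → ℝ) (hρ : ρ ∈ stdSimplex ℝ S)
    (φ : S → (∀ i, A i) → ℝ)
    -- the game is an MPG with potential function φ:
    (hMPG : ∀ i : Fin N, ∀ θ : ∀ j, S → A j → ℝ, feasible θ →
      ∀ θi' : S → A i → ℝ, (∀ s, θi' s ∈ stdSimplex ℝ (A i)) → ∀ s : S,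
        valueV γ P (Function.update θ i θi') (r i) s - valueV γ P θ (r i) s
          = valueV γ P (Function.update θ i θi') φ s - valueV γ P θ φ s)
    (θs : ∀ i, S → A i → ℝ) (hθs : feasible θs) :
    -- θs is a first-order stationary policy of the game ↔
    -- θs is a blockwise first-order stationary point of Φ over X
    (∀ i : Fin N, ∀ θi' : S → A i → ℝ,
      (∀ s, θi' s ∈ stdSimplex ℝ (A i)) →
      fderiv ℝ (fun x : S → A i → ℝ =>
          Jtot γ P ρ (Function.update θs i x) (r i)) (θs i) (θi' - θs i) ≤ 0)
    ↔
    (∀ i : Fin N, ∀ θi' : S → A i → ℝ,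
      (∀ s, θi' s ∈ stdSimplex ℝ (A i)) →
      fderiv ℝ (fun x : S → A i → ℝ =>
          Jtot γ P ρ (Function.update θs i x) φ) (θs i) (θi' - θs i) ≤ 0) := by
  constructor
  · intro H i θi2 h
    rw [← key_deriv_eq γ hγ0 hγ1 P hP r ρ hρ φ hMPG θs hθs i θi2 h]
    exact H i θi2 h
  · intro H i θi2 h
    rw [key_deriv_eq γ hγ0 hγ1 P hP r ρ hρ φ hMPG θs hθs i θi2 h]
    exact H i θi2 h
end
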